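/- arXiv:2102.13220 — 5 statements merged into one kernel-verified Lean document; each statement's English description precedes it below -/
import Mathlib

section
/- Let A_1, A_2 ∈ ℝ^{n×n} be symmetric positive semidefinite matrices (the case d = 2 over ℝ). Then the semidefinite relaxation is exact: sup_{x ∈ ℝ^n, ‖x‖=1} (⟨x, A_1 x⟩ ⟨x, A_2 x⟩)^{1/2} = sup { (Tr(A_1 X) Tr(A_2 X))^{1/2} : X ∈ ℝ^{n×n} symmetric, X ⪰ 0, Tr(X) = 1 }. -/
open Matrix

lemma circle_mixed (d₁ d₂ c₁ c₂ μ : ℝ) (hμ : μ^2 ≤ 1) (hd1 : 0 < d₁) (hd2 : d₂ < 0) :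
    ∃ s t : ℝ, s^2 + t^2 = 1 ∧ μ*d₁ ≤ s*d₁ + t*c₁ ∧ μ*d₂ ≤ s*d₂ + t*c₂ := by
  have key : ∀ k : ℝ, ∃ t : ℝ, 0 ≤ t ∧ (μ - k*t)^2 + t^2 = 1 := by
    intro k
    refine ⟨(μ*k + Real.sqrt (k^2 + 1 - μ^2))/(1+k^2), ?_, ?_⟩
    · have hs : Real.sqrt (k^2 + 1 - μ^2) ≥ |μ*k| := by
        rw [← Real.sqrt_sq_eq_abs]
        apply Real.sqrt_le_sqrt
        nlinarith
      have h2 : (0:ℝ) < 1 + k^2 := by positivity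
      have : μ*k + Real.sqrt (k^2+1-μ^2) ≥ 0 := by
        have := neg_abs_le (μ*k); linarith
      positivity
    · have h2 : (0:ℝ) < 1 + k^2 := by positivity
      have hs : Real.sqrt (k^2 + 1 - μ^2) ^ 2 = k^2 + 1 - μ^2 := by
        rw [Real.sq_sqrt]; nlinarith
      field_simp
      nlinarith [hs]
  set k₁ := c₁/d₁ with hk1
  set k₂ := c₂/d₂ with hk2
  have e1 : c₁ = k₁ * d₁ := by rw [hk1, div_mul_cancel₀ _ hd1.ne']
  have e2 : c₂ = k₂ * d₂ := by rw [hk2]; field_simp [hd2.ne]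
  rcases le_or_gt k₂ k₁ with hk | hk
  · obtain ⟨t, ht0, ht⟩ := key k₂
    refine ⟨μ - k₂*t, t, ht, ?_, ?_⟩
    · rw [e1]; nlinarith [mul_nonneg (mul_nonneg ht0 (sub_nonneg.2 hk)) hd1.le]
    · rw [e2]; ring_nf; nlinarith
  · obtain ⟨t', ht0, ht⟩ := key (-k₁)
    refine ⟨μ - k₁*(-t'), -t', by nlinarith, ?_, ?_⟩
    · rw [e1]; nlinarith
    · rw [e2]
      nlinarith [mul_nonneg (mul_nonneg ht0 (sub_nonneg.2 hk.le)) (neg_nonneg.2 hd2.le)]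

lemma circle_dom (d₁ d₂ c₁ c₂ μ : ℝ) (hμ : μ^2 ≤ 1) :
    ∃ s t : ℝ, s^2 + t^2 = 1 ∧ μ*d₁ ≤ s*d₁ + t*c₁ ∧ μ*d₂ ≤ s*d₂ + t*c₂ := by
  have hμ1 : μ ≤ 1 := by nlinarith
  have hμ2 : -1 ≤ μ := by nlinarith
  rcases le_or_gt d₁ 0 with hd1 | hd1 <;> rcases le_or_gt d₂ 0 with hd2 | hd2
  · exact ⟨-1, 0, by ring, by nlinarith, by nlinarith⟩
  · rcases eq_or_lt_of_le hd1 with h0 | h0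
    · exact ⟨1, 0, by ring, by rw [h0]; simp, by nlinarith⟩
    · obtain ⟨s, t, h, h2, h1⟩ := circle_mixed d₂ d₁ c₂ c₁ μ hμ hd2 h0
      exact ⟨s, t, h, h1, h2⟩
  · rcases eq_or_lt_of_le hd2 with h0 | h0
    · exact ⟨1, 0, by ring, by nlinarith, by rw [h0]; simp⟩
    · exact circle_mixed d₁ d₂ c₁ c₂ μ hμ hd1 h0
  · exact ⟨1, 0, by ring, by nlinarith, by nlinarith⟩

lemma dot_symm {n : ℕ} (A : Matrix (Fin n) (Fin n) ℝ) (hA : A.IsHermitian)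
    (u v : Fin n → ℝ) : u ⬝ᵥ A *ᵥ v = v ⬝ᵥ A *ᵥ u := by
  have hs : Aᵀ = A := by
    rw [← conjTranspose_eq_transpose_of_trivial]; exact hA
  conv_rhs => rw [← hs]
  rw [dotProduct_mulVec, mulVec_transpose, dotProduct_comm]

lemma quad_expand {n : ℕ} (A : Matrix (Fin n) (Fin n) ℝ) (hA : A.IsHermitian)
    (u v : Fin n → ℝ) (α β : ℝ) :
    (α • u + β • v) ⬝ᵥ A *ᵥ (α • u + β • v) =
      α^2 * (u ⬝ᵥ A *ᵥ u) + β^2 * (v ⬝ᵥ A *ᵥ v) + 2*α*β * (u ⬝ᵥ A *ᵥ v) := by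
  have h := dot_symm A hA u v
  simp only [mulVec_add, mulVec_smul, dotProduct_add, add_dotProduct,
    dotProduct_smul, smul_dotProduct, smul_eq_mul]
  rw [← h]; ring

lemma dot_expand {n : ℕ} (u v : Fin n → ℝ) (α β : ℝ) :
    (α • u + β • v) ⬝ᵥ (α • u + β • v) =
      α^2 * (u ⬝ᵥ u) + β^2 * (v ⬝ᵥ v) + 2*α*β * (u ⬝ᵥ v) := by
  have h : v ⬝ᵥ u = u ⬝ᵥ v := dotProduct_comm v u
  simp only [dotProduct_add, add_dotProduct, dotProduct_smul, smul_dotProduct, smul_eq_mul]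
  rw [h]; ring

lemma combine {n : ℕ} (A₁ A₂ : Matrix (Fin n) (Fin n) ℝ)
    (h₁ : A₁.IsHermitian) (h₂ : A₂.IsHermitian)
    (u v : Fin n → ℝ) (huu : u ⬝ᵥ u = 1) (hvv : v ⬝ᵥ v = 1) (huv : u ⬝ᵥ v = 0)
    (μ : ℝ) (hμ : μ^2 ≤ 1) :
    ∃ x : Fin n → ℝ, x ⬝ᵥ x = 1 ∧
      (∀ z : Fin n → ℝ, z ⬝ᵥ u = 0 → z ⬝ᵥ v = 0 → z ⬝ᵥ x = 0) ∧
      (1+μ)/2 * (u ⬝ᵥ A₁ *ᵥ u) + (1-μ)/2 * (v ⬝ᵥ A₁ *ᵥ v) ≤ x ⬝ᵥ A₁ *ᵥ x ∧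
      (1+μ)/2 * (u ⬝ᵥ A₂ *ᵥ u) + (1-μ)/2 * (v ⬝ᵥ A₂ *ᵥ v) ≤ x ⬝ᵥ A₂ *ᵥ x := by
  set a₁ := u ⬝ᵥ A₁ *ᵥ u; set a₂ := u ⬝ᵥ A₂ *ᵥ u
  set b₁ := v ⬝ᵥ A₁ *ᵥ v; set b₂ := v ⬝ᵥ A₂ *ᵥ v
  set c₁ := u ⬝ᵥ A₁ *ᵥ v; set c₂ := u ⬝ᵥ A₂ *ᵥ v
  obtain ⟨s, t, hst, hd1, hd2⟩ := circle_dom ((a₁-b₁)/2) ((a₂-b₂)/2) c₁ c₂ μ hμ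
  have hs1 : s^2 ≤ 1 := by nlinarith [sq_nonneg t]
  have hsp : (0:ℝ) ≤ (1+s)/2 := by nlinarith
  have hsm : (0:ℝ) ≤ (1-s)/2 := by nlinarith
  set α := Real.sqrt ((1+s)/2) with hα
  set β := (if t < 0 then (-1:ℝ) else 1) * Real.sqrt ((1-s)/2) with hβ
  have hα2 : α^2 = (1+s)/2 := Real.sq_sqrt hsp
  have hβ2 : β^2 = (1-s)/2 := by
    have hsq : ((if t < 0 then (-1:ℝ) else 1))^2 = 1 := by
      rcases lt_or_ge t 0 with h | h <;> simp [h]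
    rw [hβ, mul_pow, hsq, one_mul, Real.sq_sqrt hsm]
  have hαβ : 2*α*β = t := by
    have hprod : Real.sqrt ((1+s)/2) * Real.sqrt ((1-s)/2) = |t|/2 := by
      rw [← Real.sqrt_mul hsp, show (1+s)/2 * ((1-s)/2) = t^2/4 by nlinarith,
        show t^2/4 = (t/2)^2 by ring, Real.sqrt_sq_eq_abs, abs_div]
      norm_num
    rw [hα, hβ]
    rcases lt_or_ge t 0 with h | h
    · simp only [if_pos h]
      rw [show 2*Real.sqrt ((1+s)/2) * (-1 * Real.sqrt ((1-s)/2)) =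
        -(2*(Real.sqrt ((1+s)/2) * Real.sqrt ((1-s)/2))) by ring, hprod, abs_of_neg h]
      ring
    · simp only [if_neg (not_lt.2 h)]
      rw [show 2*Real.sqrt ((1+s)/2) * (1 * Real.sqrt ((1-s)/2)) =
        2*(Real.sqrt ((1+s)/2) * Real.sqrt ((1-s)/2)) by ring, hprod, abs_of_nonneg h]
      ring
  refine ⟨α • u + β • v, ?_, ?_, ?_, ?_⟩
  · rw [dot_expand, huu, hvv, huv, hα2, hβ2]; ring
  · intro z hzu hzv
    simp [dotProduct_add, dotProduct_smul, hzu, hzv]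
  · rw [quad_expand A₁ h₁, hα2, hβ2]
    have : 2*α*β*c₁ = t*c₁ := by rw [hαβ]
    rw [this]; nlinarith [hd1]
  · rw [quad_expand A₂ h₂, hα2, hβ2]
    have : 2*α*β*c₂ = t*c₂ := by rw [hαβ]
    rw [this]; nlinarith [hd2]
lemma dom_orth {n : ℕ} (A₁ A₂ : Matrix (Fin n) (Fin n) ℝ)
    (h₁ : A₁.IsHermitian) (h₂ : A₂.IsHermitian) :
    ∀ (k : ℕ) (v : Fin (k+1) → (Fin n → ℝ)) (w : Fin (k+1) → ℝ),
    (∀ i j, v i ⬝ᵥ v j = if i = j then 1 else 0) → (∀ i, 0 ≤ w i) →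
    ∃ x : Fin n → ℝ, x ⬝ᵥ x = 1 ∧
      (∀ z : Fin n → ℝ, (∀ i, z ⬝ᵥ v i = 0) → z ⬝ᵥ x = 0) ∧
      (∑ i, w i * (v i ⬝ᵥ A₁ *ᵥ v i)) ≤ (∑ i, w i) * (x ⬝ᵥ A₁ *ᵥ x) ∧
      (∑ i, w i * (v i ⬝ᵥ A₂ *ᵥ v i)) ≤ (∑ i, w i) * (x ⬝ᵥ A₂ *ᵥ x) := by
  intro k
  induction k with
  | zero =>
    intro v w horth hw
    refine ⟨v 0, by simpa using horth 0 0, fun z hz => hz 0, ?_, ?_⟩ <;>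
      simp [Fin.sum_univ_succ]
  | succ k ih =>
    intro v w horth hw
    obtain ⟨y, hyy, hyorth, hy1, hy2⟩ := ih (fun i => v i.succ) (fun i => w i.succ)
      (fun i j => by rw [horth]; simp [Fin.succ_inj]) (fun i => hw i.succ)
    set W' : ℝ := ∑ i : Fin (k+1), w i.succ with hW'
    have hW'0 : 0 ≤ W' := Finset.sum_nonneg fun i _ => hw i.succ
    have hv0y : v 0 ⬝ᵥ y = 0 :=
      hyorth (v 0) (fun i => by rw [horth, if_neg (Ne.symm (Fin.succ_ne_zero i))])
    have hsum : ∀ (B : Matrix (Fin n) (Fin n) ℝ),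
        ∑ i : Fin (k+2), w i * (v i ⬝ᵥ B *ᵥ v i) =
        w 0 * (v 0 ⬝ᵥ B *ᵥ v 0) + ∑ i : Fin (k+1), w i.succ * (v i.succ ⬝ᵥ B *ᵥ v i.succ) :=
      fun B => Fin.sum_univ_succ _
    have hsumw : ∑ i : Fin (k+2), w i = w 0 + W' := Fin.sum_univ_succ _
    rcases eq_or_lt_of_le (add_nonneg (hw 0) hW'0) with hW | hW
    · -- total weight zero: all terms zero
      have hw0 : w 0 = 0 := le_antisymm (by linarith) (hw 0)
      have hW'z : W' = 0 := by linarith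
      have hsz : ∀ i : Fin (k+1), w i.succ = 0 := fun i =>
        (Finset.sum_eq_zero_iff_of_nonneg (fun j _ => hw j.succ)).mp hW'z i (Finset.mem_univ i)
      have hwz : ∀ i : Fin (k+2), w i = 0 := Fin.cases hw0 hsz
      refine ⟨v 0, by simpa using horth 0 0, fun z hz => hz 0, ?_, ?_⟩ <;>
        simp [hwz]
    · set W : ℝ := w 0 + W' with hW2
      set μ : ℝ := (w 0 - W') / W with hμdef
      have hμ : μ^2 ≤ 1 := by
        rw [hμdef, div_pow, div_le_one (pow_pos hW 2)]
        nlinarith [hw 0, hW'0]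
      have hμp : (1+μ)/2 = w 0 / W := by
        rw [hμdef]; field_simp [hW.ne']; ring
      have hμm : (1-μ)/2 = W' / W := by
        rw [hμdef]; field_simp [hW.ne']; ring
      obtain ⟨x, hxx, hxorth, hx1, hx2⟩ := combine A₁ A₂ h₁ h₂ (v 0) y
        (by simpa using horth 0 0) hyy hv0y μ hμ
      rw [hμp, hμm] at hx1 hx2
      have key : ∀ (B : Matrix (Fin n) (Fin n) ℝ),
          w 0 / W * (v 0 ⬝ᵥ B *ᵥ v 0) + W' / W * (y ⬝ᵥ B *ᵥ y) ≤ x ⬝ᵥ B *ᵥ x →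
          ∑ i : Fin (k+1), w i.succ * (v i.succ ⬝ᵥ B *ᵥ v i.succ) ≤ W' * (y ⬝ᵥ B *ᵥ y) →
          ∑ i : Fin (k+2), w i * (v i ⬝ᵥ B *ᵥ v i) ≤ (∑ i : Fin (k+2), w i) * (x ⬝ᵥ B *ᵥ x) := by
        intro B hB hB2
        rw [hsum, hsumw]
        have h3 : w 0 * (v 0 ⬝ᵥ B *ᵥ v 0) + W' * (y ⬝ᵥ B *ᵥ y) ≤ W * (x ⬝ᵥ B *ᵥ x) := by
          have h4 := mul_le_mul_of_nonneg_left hB (le_of_lt hW)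
          have h5 : W * (w 0 / W * (v 0 ⬝ᵥ B *ᵥ v 0) + W' / W * (y ⬝ᵥ B *ᵥ y)) =
              w 0 * (v 0 ⬝ᵥ B *ᵥ v 0) + W' * (y ⬝ᵥ B *ᵥ y) := by
            field_simp
          rwa [h5] at h4
        linarith
      exact ⟨x, hxx,
        fun z hz => hxorth z (hz 0) (hyorth z (fun i => hz i.succ)),
        key A₁ hx1 hy1, key A₂ hx2 hy2⟩
section
variable {n : ℕ} {X : Matrix (Fin n) (Fin n) ℝ} (hX : X.PosSemidef)

noncomputable def evec (j : Fin n) : Fin n → ℝ :=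
  fun i => (hX.1.eigenvectorUnitary : Matrix (Fin n) (Fin n) ℝ) i j

lemma evec_orth (i j : Fin n) : evec hX i ⬝ᵥ evec hX j = if i = j then 1 else 0 := by
  have h := Unitary.coe_star_mul_self hX.1.eigenvectorUnitary
  have h2 := congrFun (congrFun (congrArg (fun M : Matrix (Fin n) (Fin n) ℝ => M) h) i) j
  simp only [Matrix.mul_apply, Matrix.one_apply, star_apply, star_trivial] at h2
  simpa [evec, dotProduct, mul_comm] using h2

lemma X_entry (p q : Fin n) :
    X p q = ∑ j, hX.1.eigenvalues j * evec hX j p * evec hX j q := by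
  conv_lhs => rw [hX.1.spectral_theorem]
  simp [Matrix.mul_apply, Matrix.diagonal, evec, Finset.sum_mul, star_apply, star_trivial]
  apply Finset.sum_congr rfl
  intro j _
  ring
end

section
variable {n : ℕ} {X : Matrix (Fin n) (Fin n) ℝ} (hX : X.PosSemidef)

lemma trace_X : X.trace = ∑ j, hX.1.eigenvalues j := by
  simp only [Matrix.trace, Matrix.diag, X_entry hX]
  rw [Finset.sum_comm]
  apply Finset.sum_congr rfl
  intro j _
  have h1 : evec hX j ⬝ᵥ evec hX j = 1 := by simpa using evec_orth hX j j
  calc ∑ p, hX.1.eigenvalues j * evec hX j p * evec hX j p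
      = hX.1.eigenvalues j * (evec hX j ⬝ᵥ evec hX j) := by
        rw [dotProduct, Finset.mul_sum]; apply Finset.sum_congr rfl; intro p _; ring
    _ = hX.1.eigenvalues j := by rw [h1, mul_one]

lemma trace_AX (A : Matrix (Fin n) (Fin n) ℝ) :
    (A * X).trace = ∑ j, hX.1.eigenvalues j * (evec hX j ⬝ᵥ A *ᵥ evec hX j) := by
  calc (A * X).trace
      = ∑ i, ∑ p, ∑ j, hX.1.eigenvalues j * A i p * evec hX j p * evec hX j i := by
        simp only [Matrix.trace, Matrix.diag, Matrix.mul_apply, X_entry hX, Finset.mul_sum]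
        exact Finset.sum_congr rfl fun i _ => Finset.sum_congr rfl fun p _ =>
          Finset.sum_congr rfl fun j _ => by ring
    _ = ∑ i, ∑ j, ∑ p, hX.1.eigenvalues j * A i p * evec hX j p * evec hX j i :=
        Finset.sum_congr rfl fun i _ => Finset.sum_comm
    _ = ∑ j, ∑ i, ∑ p, hX.1.eigenvalues j * A i p * evec hX j p * evec hX j i :=
        Finset.sum_comm
    _ = ∑ j, hX.1.eigenvalues j * (evec hX j ⬝ᵥ A *ᵥ evec hX j) := by
        refine Finset.sum_congr rfl fun j _ => ?_
        simp only [dotProduct, mulVec, Finset.mul_sum]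
        exact Finset.sum_congr rfl fun i _ => Finset.sum_congr rfl fun p _ => by ring
end
lemma quad_le_trace {n : ℕ} {A : Matrix (Fin n) (Fin n) ℝ} (hA : A.PosSemidef)
    (x : Fin n → ℝ) (hx : x ⬝ᵥ x = 1) : x ⬝ᵥ A *ᵥ x ≤ A.trace := by
  obtain ⟨B, rfl⟩ : ∃ B : Matrix (Fin n) (Fin n) ℝ, A = Bᴴ * B := by
    open scoped MatrixOrder Matrix.Norms.L2Operator in
    obtain ⟨B, hB⟩ := CStarAlgebra.nonneg_iff_eq_star_mul_self.mp hA.nonneg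
    exact ⟨B, hB⟩
  have h1 : x ⬝ᵥ (Bᴴ * B) *ᵥ x = (B *ᵥ x) ⬝ᵥ (B *ᵥ x) := by
    rw [← Matrix.mulVec_mulVec, Matrix.dotProduct_mulVec, conjTranspose_eq_transpose_of_trivial,
      ← Matrix.mulVec_transpose, Matrix.transpose_transpose]
  rw [h1]
  have h2 : (Bᴴ * B).trace = ∑ j, ∑ i, (B i j)^2 := by
    simp only [Matrix.trace, Matrix.diag, Matrix.mul_apply, conjTranspose_apply, star_trivial]
    exact Finset.sum_congr rfl fun j _ => Finset.sum_congr rfl fun i _ => by rw [pow_two]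
  rw [h2, dotProduct]
  have h3 : ∀ i, (B *ᵥ x) i * (B *ᵥ x) i ≤ ∑ j, (B i j)^2 := by
    intro i
    have hcs := Finset.sum_mul_sq_le_sq_mul_sq Finset.univ (fun j => B i j) x
    have hx2 : ∑ j, x j ^ 2 = 1 := by
      rw [← hx, dotProduct]; exact Finset.sum_congr rfl fun j _ => pow_two (x j)
    simp only [mulVec, dotProduct]
    calc (∑ j, B i j * x j) * (∑ j, B i j * x j) = (∑ j, B i j * x j)^2 := (pow_two _).symm
      _ ≤ (∑ j, (B i j)^2) * ∑ j, (x j)^2 := hcs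
      _ = ∑ j, (B i j)^2 := by rw [hx2, mul_one]
  calc ∑ i, (B *ᵥ x) i * (B *ᵥ x) i ≤ ∑ i, ∑ j, (B i j)^2 := Finset.sum_le_sum fun i _ => h3 i
    _ = ∑ j, ∑ i, (B i j)^2 := Finset.sum_comm

lemma quad_nonneg {n : ℕ} {A : Matrix (Fin n) (Fin n) ℝ} (hA : A.PosSemidef)
    (x : Fin n → ℝ) : 0 ≤ x ⬝ᵥ A *ᵥ x := by
  have := hA.dotProduct_mulVec_nonneg x
  simpa using this

lemma trace_nonneg' {n : ℕ} {A : Matrix (Fin n) (Fin n) ℝ} (hA : A.PosSemidef) :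
    0 ≤ A.trace := by
  rw [Matrix.trace]
  refine Finset.sum_nonneg fun i _ => ?_
  have := quad_nonneg hA (Pi.single i 1)
  simpa [dotProduct, mulVec, Pi.single_apply, Finset.mul_sum, ite_mul, mul_ite] using this

lemma vecMulVec_psd {n : ℕ} (x : Fin n → ℝ) : (vecMulVec x x).PosSemidef := by
  refine Matrix.PosSemidef.of_dotProduct_mulVec_nonneg ?_ ?_
  · ext i j
    simp [vecMulVec, conjTranspose_apply, mul_comm]
  · intro y
    have : y ⬝ᵥ (vecMulVec x x) *ᵥ y = (x ⬝ᵥ y) * (x ⬝ᵥ y) := by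
      simp only [dotProduct, mulVec, vecMulVec_apply, Finset.sum_mul, Finset.mul_sum]
      rw [Finset.sum_comm]
      exact Finset.sum_congr rfl fun i _ => Finset.sum_congr rfl fun j _ => by ring
    simp only [star_trivial]
    rw [this]
    exact mul_self_nonneg _

lemma trace_vecMulVec {n : ℕ} (x : Fin n → ℝ) : (vecMulVec x x).trace = x ⬝ᵥ x := by
  simp [Matrix.trace, Matrix.diag, vecMulVec_apply, dotProduct]

lemma trace_mul_vecMulVec {n : ℕ} (A : Matrix (Fin n) (Fin n) ℝ) (x : Fin n → ℝ) :
    (A * vecMulVec x x).trace = x ⬝ᵥ A *ᵥ x := by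
  simp only [Matrix.trace, Matrix.diag, Matrix.mul_apply, vecMulVec_apply, dotProduct, mulVec]
  simp only [Finset.mul_sum]
  exact Finset.sum_congr rfl fun i _ => Finset.sum_congr rfl fun j _ => by ring

/-- exactness of the semidefinite relaxation for `d = 2` over `ℝ`. -/
theorem stmt_6 (n : ℕ) (A₁ A₂ : Matrix (Fin n) (Fin n) ℝ)
    (hA₁ : A₁.PosSemidef) (hA₂ : A₂.PosSemidef) :
    sSup {v : ℝ | ∃ x : EuclideanSpace ℝ (Fin n), ‖x‖ = 1 ∧
        v = Real.sqrt ((x ⬝ᵥ A₁.mulVec x) * (x ⬝ᵥ A₂.mulVec x))} =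
      sSup {v : ℝ | ∃ X : Matrix (Fin n) (Fin n) ℝ, X.PosSemidef ∧ X.trace = 1 ∧
        v = Real.sqrt ((A₁ * X).trace * (A₂ * X).trace)} := by
  classical
  rcases Nat.eq_zero_or_pos n with hn | hn
  · subst hn
    have hL : {v : ℝ | ∃ x : EuclideanSpace ℝ (Fin 0), ‖x‖ = 1 ∧
        v = Real.sqrt ((x ⬝ᵥ A₁.mulVec x) * (x ⬝ᵥ A₂.mulVec x))} = ∅ := by
      ext v
      simp only [Set.mem_setOf_eq, Set.mem_empty_iff_false, iff_false, not_exists]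
      rintro x ⟨hx, -⟩
      have hx0 : x = 0 := Subsingleton.elim x 0
      rw [hx0, norm_zero] at hx
      norm_num at hx
    have hR : {v : ℝ | ∃ X : Matrix (Fin 0) (Fin 0) ℝ, X.PosSemidef ∧ X.trace = 1 ∧
        v = Real.sqrt ((A₁ * X).trace * (A₂ * X).trace)} = ∅ := by
      ext v
      simp only [Set.mem_setOf_eq, Set.mem_empty_iff_false, iff_false, not_exists]
      rintro X ⟨-, htr, -⟩
      rw [Matrix.trace] at htr
      simp at htr
    rw [hL, hR]
  · obtain ⟨k, rfl⟩ : ∃ k, n = k + 1 := ⟨n - 1, (Nat.succ_pred_eq_of_pos hn).symm⟩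
    set L := {v : ℝ | ∃ x : EuclideanSpace ℝ (Fin (k+1)), ‖x‖ = 1 ∧
        v = Real.sqrt ((x ⬝ᵥ A₁.mulVec x) * (x ⬝ᵥ A₂.mulVec x))} with hLdef
    set R := {v : ℝ | ∃ X : Matrix (Fin (k+1)) (Fin (k+1)) ℝ, X.PosSemidef ∧ X.trace = 1 ∧
        v = Real.sqrt ((A₁ * X).trace * (A₂ * X).trace)} with hRdef
    have keynorm : ∀ x : EuclideanSpace ℝ (Fin (k+1)), ‖x‖ = 1 ↔ x ⬝ᵥ x = 1 := by
      intro x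
      rw [EuclideanSpace.norm_eq]
      have he : ∑ i, ‖x i‖^2 = x ⬝ᵥ x := by
        rw [dotProduct]
        exact Finset.sum_congr rfl fun i _ => by
          rw [Real.norm_eq_abs, sq_abs, pow_two]
      rw [he]
      exact ⟨fun h => Real.sqrt_eq_one.mp h, fun h => by rw [h, Real.sqrt_one]⟩
    have hbound : ∀ v ∈ L, v ≤ Real.sqrt (A₁.trace * A₂.trace) := by
      rintro v ⟨x, hx, rfl⟩
      have hx' : x ⬝ᵥ x = 1 := (keynorm x).mp hx
      exact Real.sqrt_le_sqrt (mul_le_mul (quad_le_trace hA₁ x hx')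
        (quad_le_trace hA₂ x hx') (quad_nonneg hA₂ x) (trace_nonneg' hA₁))
    have hbddL : BddAbove L := ⟨_, hbound⟩
    have hLR : L ⊆ R := by
      rintro v ⟨x, hx, rfl⟩
      have hx' : x ⬝ᵥ x = 1 := (keynorm x).mp hx
      exact ⟨vecMulVec x x, vecMulVec_psd x, by rw [trace_vecMulVec, hx'],
        by rw [trace_mul_vecMulVec, trace_mul_vecMulVec]⟩
    have hLne : L.Nonempty := by
      refine ⟨_, (WithLp.toLp 2 (Pi.single 0 1 : Fin (k+1) → ℝ) : EuclideanSpace ℝ (Fin (k+1))), ?_, rfl⟩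
      rw [keynorm]
      simp [dotProduct, Pi.single_apply]
    have hdom : ∀ u ∈ R, ∃ w ∈ L, u ≤ w := by
      rintro u ⟨X, hX, htr, rfl⟩
      obtain ⟨x, hxx, -, hx1, hx2⟩ := dom_orth A₁ A₂ hA₁.1 hA₂.1 k (evec hX)
        hX.1.eigenvalues (evec_orth hX) (hX.eigenvalues_nonneg)
      have hsl : ∑ j, hX.1.eigenvalues j = 1 := by rw [← trace_X hX, htr]
      have h1 : (A₁ * X).trace ≤ x ⬝ᵥ A₁ *ᵥ x := by
        rw [trace_AX hX A₁]
        calc ∑ j, hX.1.eigenvalues j * (evec hX j ⬝ᵥ A₁ *ᵥ evec hX j)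
            ≤ (∑ j, hX.1.eigenvalues j) * (x ⬝ᵥ A₁ *ᵥ x) := hx1
          _ = x ⬝ᵥ A₁ *ᵥ x := by rw [hsl, one_mul]
      have h2 : (A₂ * X).trace ≤ x ⬝ᵥ A₂ *ᵥ x := by
        rw [trace_AX hX A₂]
        calc ∑ j, hX.1.eigenvalues j * (evec hX j ⬝ᵥ A₂ *ᵥ evec hX j)
            ≤ (∑ j, hX.1.eigenvalues j) * (x ⬝ᵥ A₂ *ᵥ x) := hx2
          _ = x ⬝ᵥ A₂ *ᵥ x := by rw [hsl, one_mul]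
      have h1n : 0 ≤ (A₁ * X).trace := by
        rw [trace_AX hX A₁]
        exact Finset.sum_nonneg fun j _ =>
          mul_nonneg (hX.eigenvalues_nonneg j) (quad_nonneg hA₁ _)
      have h2n : 0 ≤ (A₂ * X).trace := by
        rw [trace_AX hX A₂]
        exact Finset.sum_nonneg fun j _ =>
          mul_nonneg (hX.eigenvalues_nonneg j) (quad_nonneg hA₂ _)
      refine ⟨Real.sqrt ((x ⬝ᵥ A₁ *ᵥ x) * (x ⬝ᵥ A₂ *ᵥ x)), ?_, ?_⟩
      · exact ⟨(WithLp.toLp 2 x : EuclideanSpace ℝ (Fin (k+1))), (keynorm (WithLp.toLp 2 x)).mpr hxx, rfl⟩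
      · exact Real.sqrt_le_sqrt (mul_le_mul h1 h2 h2n ((h1n.trans h1)))
    have hbddR : BddAbove R := by
      refine ⟨Real.sqrt (A₁.trace * A₂.trace), fun u hu => ?_⟩
      obtain ⟨w, hw, huw⟩ := hdom u hu
      exact huw.trans (hbound w hw)
    apply le_antisymm
    · exact csSup_le_csSup hbddR hLne hLR
    · obtain ⟨v₀, x₀, hx₀, hv₀⟩ := hLne
      have h0 : (0:ℝ) ≤ sSup L := by
        refine le_trans ?_ (le_csSup hbddL ⟨x₀, hx₀, hv₀⟩)
        rw [hv₀]; exact Real.sqrt_nonneg _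
      refine Real.sSup_le (fun u hu => ?_) h0
      obtain ⟨w, hwL, huw⟩ := hdom u hu
      exact huw.trans (le_csSup hbddL hwL)
end

section
/- Let A_1, …, A_d ∈ ℝ^{n×n} be symmetric positive semidefinite matrices that pairwise commute: A_i A_j = A_j A_i for all i, j. Then Opt(A) = OptSDP(A). -/
open Matrix


lemma joint_diag (n : ℕ) {d : ℕ} (T : Fin d → Module.End ℝ (EuclideanSpace ℝ (Fin n)))
    (hT : ∀ i, (T i).IsSymmetric) (hcomm : ∀ i j, T i * T j = T j * T i) :
    ∃ (b : OrthonormalBasis (Fin n) ℝ (EuclideanSpace ℝ (Fin n))) (μ : Fin d → Fin n → ℝ),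
      ∀ i k, T i (b k) = μ i k • b k := by
  classical
  set V : (Fin d → ℝ) → Submodule ℝ (EuclideanSpace ℝ (Fin n)) :=
    fun χ => ⨅ i, Module.End.eigenspace (T i) (χ i) with hV
  have hInt : DirectSum.IsInternal V :=
    LinearMap.IsSymmetric.LinearMap.IsSymmetric.directSum_isInternal_of_pairwise_commute hT
      (fun i j _ => hcomm i j)
  haveI : Fintype {χ // V χ ≠ ⊥} := hInt.submodule_iSupIndep.fintypeNeBotOfFiniteDimensional
  have hInt' : DirectSum.IsInternal (fun χ : {χ // V χ ≠ ⊥} => V χ) :=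
    DirectSum.isInternal_ne_bot_iff.mpr hInt
  have hOrth : OrthogonalFamily ℝ (fun χ : {χ // V χ ≠ ⊥} => V χ)
      (fun χ => (V χ).subtypeₗᵢ) :=
    (LinearMap.IsSymmetric.orthogonalFamily_iInf_eigenspaces hT).comp Subtype.val_injective
  let b0 := hInt'.collectedOrthonormalBasis hOrth
    (fun χ => stdOrthonormalBasis ℝ (V χ))
  have hcard : Fintype.card ((χ : {χ // V χ ≠ ⊥}) × Fin (Module.finrank ℝ (V χ))) = n := by
    rw [← Module.finrank_eq_card_basis b0.toBasis, finrank_euclideanSpace_fin]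
  let e := Fintype.equivFinOfCardEq hcard
  refine ⟨b0.reindex e, fun i k => ((e.symm k).1 : Fin d → ℝ) i, fun i k => ?_⟩
  have hmem : b0 (e.symm k) ∈ V (e.symm k).1 :=
    hInt'.collectedOrthonormalBasis_mem hOrth _ _
  simp only [hV] at hmem
  have := (Submodule.mem_iInf _).mp hmem i
  rw [Module.End.mem_eigenspace_iff] at this
  simpa [OrthonormalBasis.reindex_apply] using this


/-- exactness of the semidefinite relaxation for pairwise
commuting PSD matrices. -/
theorem stmt_7 (n d : ℕ) (hn : 0 < n) (hd : 0 < d)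
    (A : Fin d → Matrix (Fin n) (Fin n) ℝ) (hA : ∀ i, (A i).PosSemidef)
    (hcomm : ∀ i j, A i * A j = A j * A i) :
    sSup {v : ℝ | ∃ x : EuclideanSpace ℝ (Fin n), ‖x‖ = 1 ∧
        v = (∏ i, (x ⬝ᵥ (A i).mulVec x)) ^ ((d : ℝ)⁻¹)} =
      sSup {v : ℝ | ∃ X : Matrix (Fin n) (Fin n) ℝ, X.PosSemidef ∧ X.trace = 1 ∧
        v = (∏ i, (A i * X).trace) ^ ((d : ℝ)⁻¹)} := by
  classical
  congr 1
  ext v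
  simp only [Set.mem_setOf_eq]
  constructor
  · -- x ↦ X = x xᵀ
    rintro ⟨x, hx, rfl⟩
    refine ⟨vecMulVec x x, ?_, ?_, ?_⟩
    · apply Matrix.PosSemidef.of_dotProduct_mulVec_nonneg
      · ext j k
        simp [vecMulVec_apply, mul_comm]
      · intro y
        have : (star y) ⬝ᵥ (vecMulVec x x).mulVec y = (x ⬝ᵥ y) * (x ⬝ᵥ y) := by
          simp [dotProduct, mulVec, vecMulVec_apply, Finset.mul_sum, Finset.sum_mul]
          rw [Finset.sum_comm]
          congr 1; ext j; congr 1; ext k; ring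
        rw [this]
        exact mul_self_nonneg _
    · have hx2 : ∑ j, x j * x j = 1 := by
        have := congrArg (fun t : ℝ => t ^ 2) (EuclideanSpace.norm_eq x ▸ hx)
        simp only at this
        rw [Real.sq_sqrt (by positivity)] at this
        simpa [Real.norm_eq_abs, sq, abs_mul_abs_self] using this
      simpa [Matrix.trace, Matrix.diag, vecMulVec_apply] using hx2
    · congr 1
      refine Finset.prod_congr rfl fun i _ => ?_
      simp only [Matrix.trace, Matrix.diag, mul_apply, dotProduct, mulVec, vecMulVec_apply,
        Finset.mul_sum]
      exact Finset.sum_congr rfl fun j _ => Finset.sum_congr rfl fun k _ => by ring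
  · -- X ↦ x via joint diagonalization
    rintro ⟨X, hX, hXtr, rfl⟩
    obtain ⟨b, μ, heig⟩ := joint_diag n (fun i => Matrix.toEuclideanLin (A i))
      (fun i => Matrix.isHermitian_iff_isSymmetric.mp (hA i).1)
      (fun i j => by
        ext x
        simp [Module.End.mul_apply, toEuclideanLin_apply, Matrix.mulVec_mulVec, hcomm i j])
    -- the matrix U with rows b k
    set U : Matrix (Fin n) (Fin n) ℝ := Matrix.of (fun k j => b k j) with hU
    have hUUt : U * Uᵀ = 1 := by
      ext k l
      have := orthonormal_iff_ite.mp b.orthonormal k l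
      simpa [mul_apply, hU, Matrix.one_apply, PiLp.inner_apply, RCLike.inner_apply, mul_comm] using this
    have hUtU : Uᵀ * U = 1 := mul_eq_one_comm.mp hUUt
    have hAU : ∀ i, A i * Uᵀ = Uᵀ * Matrix.diagonal (μ i) := by
      intro i
      have key : ∀ k, (A i).mulVec (fun j => b k j) = fun j => μ i k * b k j := by
        intro k
        funext j
        have h1 := congrFun (congrArg (WithLp.equiv 2 (Fin n → ℝ)) (heig i k)) j
        simpa [ofLp_toEuclideanLin_apply] using h1
      ext j k
      calc (A i * Uᵀ) j k = ((A i).mulVec (fun l => b k l)) j := by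
            simp [Matrix.mul_apply, mulVec, dotProduct, hU]
        _ = μ i k * b k j := congrFun (key k) j
        _ = (Uᵀ * Matrix.diagonal (μ i)) j k := by
            rw [Matrix.mul_diagonal]
            simp [hU, mul_comm]
    have hAeq : ∀ i, A i = Uᵀ * Matrix.diagonal (μ i) * U := by
      intro i
      calc A i = A i * (Uᵀ * U) := by rw [hUtU, mul_one]
        _ = (A i * Uᵀ) * U := by rw [mul_assoc]
        _ = Uᵀ * Matrix.diagonal (μ i) * U := by rw [hAU]
    set p : Fin n → ℝ := fun k => (U * X * Uᵀ) k k with hp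
    have hpnn : ∀ k, 0 ≤ p k := by
      intro k
      have h2 := hX.dotProduct_mulVec_nonneg (fun j => U k j)
      have : (star fun j => U k j) ⬝ᵥ X.mulVec (fun j => U k j) = p k := by
        simp [hp, mul_apply, dotProduct, mulVec, Finset.mul_sum, Finset.sum_mul]
        rw [Finset.sum_comm]
        congr 1; ext j; congr 1; ext l; ring
      rwa [this] at h2
    have hpsum : ∑ k, p k = 1 := by
      have : ∑ k, p k = (U * X * Uᵀ).trace := rfl
      rw [this, Matrix.trace_mul_comm (U * X) Uᵀ, ← mul_assoc, hUtU, one_mul, hXtr]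
    have htr : ∀ i, (A i * X).trace = ∑ k, μ i k * p k := by
      intro i
      rw [hAeq i]
      have : Uᵀ * Matrix.diagonal (μ i) * U * X = Uᵀ * (Matrix.diagonal (μ i) * (U * X)) := by
        noncomm_ring
      rw [this, Matrix.trace_mul_comm]
      have : Matrix.diagonal (μ i) * (U * X) * Uᵀ = Matrix.diagonal (μ i) * (U * X * Uᵀ) := by
        noncomm_ring
      rw [this]
      simp [Matrix.trace, Matrix.diag, diagonal_mul, hp]
    -- build x
    set q : EuclideanSpace ℝ (Fin n) := WithLp.toLp 2 fun k => Real.sqrt (p k) with hq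
    refine ⟨b.repr.symm q, ?_, ?_⟩
    · rw [LinearIsometryEquiv.norm_map, EuclideanSpace.norm_eq]
      have : ∀ k, ‖q k‖ ^ 2 = p k := by
        intro k
        rw [Real.norm_eq_abs, sq_abs, hq, PiLp.toLp_apply, Real.sq_sqrt (hpnn k)]
      rw [Finset.sum_congr rfl (fun k _ => this k), hpsum, Real.sqrt_one]
    · congr 1
      refine Finset.prod_congr rfl fun i _ => ?_
      rw [htr i]
      have hbridge : (b.repr.symm q) ⬝ᵥ (A i).mulVec (b.repr.symm q) =
          inner ℝ (b.repr.symm q) ((Matrix.toEuclideanLin (A i)) (b.repr.symm q)) := by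
        simp [dotProduct, PiLp.inner_apply, RCLike.inner_apply, toEuclideanLin_apply, mulVec, mul_comm]
      rw [hbridge]
      have hrepr : (Matrix.toEuclideanLin (A i)) (b.repr.symm q) =
          b.repr.symm (WithLp.toLp 2 fun k => μ i k * q k) := by
        rw [← OrthonormalBasis.sum_repr_symm, ← OrthonormalBasis.sum_repr_symm, map_sum]
        refine Finset.sum_congr rfl fun k _ => ?_
        rw [LinearMap.map_smul, heig i k, smul_smul, mul_comm]
      rw [hrepr, ← b.repr.inner_map_map (b.repr.symm q) (b.repr.symm _)]
      simp only [LinearIsometryEquiv.apply_symm_apply]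
      rw [PiLp.inner_apply]
      refine Finset.sum_congr rfl fun k _ => ?_
      simp only [RCLike.inner_apply, starRingEnd_apply, star_trivial]
      simp only [hq, PiLp.toLp_apply]
      have : Real.sqrt (p k) * (μ i k * Real.sqrt (p k)) = μ i k * (Real.sqrt (p k) * Real.sqrt (p k)) := by ring
      rw [mul_assoc, Real.mul_self_sqrt (hpnn k)]
end

section
/- Let X be a random variable with the Gamma distribution of shape α > 0 and rate β > 0, i.e. with density p(x) = Γ(α)^{-1} β^α x^{α−1} e^{−βx} on (0, ∞). Then E[log X] = ψ(α) − log β, where ψ = Γ'/Γ is the digamma function. -/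
open MeasureTheory ProbabilityTheory
open scoped Topology NNReal ENNReal

/-- The digamma function `ψ = Γ'/Γ`, the derivative of `log ∘ Γ`. -/
noncomputable def digamma (x : ℝ) : ℝ := deriv (fun t : ℝ => Real.log (Real.Gamma t)) x

open Filter Set Asymptotics Real in
/-- Integrability of the integrand of `Γ'` and the value of the derivative of `Γ`. -/
lemma gamma_deriv_aux (a : ℝ) (ha : 0 < a) :
    MeasureTheory.IntegrableOn (fun t : ℝ => t ^ (a - 1) * (Real.log t * Real.exp (-t)))
      (Set.Ioi 0) ∧
    HasDerivAt Real.Gamma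
      (∫ t in Set.Ioi 0, t ^ (a - 1) * (Real.log t * Real.exp (-t))) a := by
  have hre : 0 < (a : ℂ).re := by simpa using ha
  have hfc : LocallyIntegrableOn (fun x : ℝ => (Real.exp (-x) : ℂ)) (Ioi 0) :=
    (Continuous.continuousOn (Complex.continuous_ofReal.comp
      (Real.continuous_exp.comp continuous_neg))).locallyIntegrableOn measurableSet_Ioi
  have hf_top : (fun x : ℝ => (Real.exp (-x) : ℂ)) =O[atTop] (· ^ (-(a + 1))) := by
    rw [← isBigO_norm_left]
    simp_rw [Complex.norm_real, isBigO_norm_left]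
    simpa only [neg_one_mul] using (isLittleO_exp_neg_mul_rpow_atTop zero_lt_one _).isBigO
  have hf_bot : (fun x : ℝ => (Real.exp (-x) : ℂ)) =O[𝓝[>] (0:ℝ)] (· ^ (-(0:ℝ))) := by
    simp_rw [neg_zero, rpow_zero]
    refine isBigO_const_of_tendsto (?_ : Tendsto _ _ (𝓝 (1 : ℂ))) one_ne_zero
    rw [(by simp : (1 : ℂ) = Real.exp (-0))]
    exact (Complex.continuous_ofReal.comp
      (Real.continuous_exp.comp continuous_neg)).continuousWithinAt
  have hmell := mellin_hasDerivAt_of_isBigO_rpow (E := ℂ) hfc hf_top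
    (by simpa using lt_add_one a) hf_bot hre
  have key : ∀ t ∈ Ioi (0:ℝ),
      ((t ^ (a - 1) * (Real.log t * Real.exp (-t)) : ℝ) : ℂ)
        = (t : ℂ) ^ ((a : ℂ) - 1) * (Real.log t * Real.exp (-t)) := by
    intro t ht
    rw [show ((a : ℂ) - 1) = ((a - 1 : ℝ) : ℂ) by push_cast; ring,
      ← Complex.ofReal_cpow (le_of_lt ht)]
    push_cast
    ring
  constructor
  · have h1 : IntegrableOn
        (fun t : ℝ => (t : ℂ) ^ ((a : ℂ) - 1) • (Real.log t • (Real.exp (-t) : ℂ))) (Ioi 0) :=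
      hmell.1
    have h2 := h1.re
    refine MeasureTheory.IntegrableOn.congr_fun h2 (fun t ht => ?_) measurableSet_Ioi
    have : ((t : ℂ) ^ ((a : ℂ) - 1) • (Real.log t • (Real.exp (-t) : ℂ)))
        = ((t ^ (a - 1) * (Real.log t * Real.exp (-t)) : ℝ) : ℂ) := by
      rw [key t ht, smul_eq_mul, Complex.real_smul]
    rw [this]
    exact (Complex.ofReal_re _).symm
  · set G' : ℝ := ∫ t in Set.Ioi 0, t ^ (a - 1) * (Real.log t * Real.exp (-t)) with hG'
    have hI := Complex.hasDerivAt_GammaIntegral hre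
    have hIval : (∫ t : ℝ in Ioi 0, (t : ℂ) ^ ((a : ℂ) - 1) * (Real.log t * Real.exp (-t)))
        = (G' : ℂ) := by
      rw [hG']
      calc (∫ t : ℝ in Ioi 0, (t : ℂ) ^ ((a : ℂ) - 1) * (Real.log t * Real.exp (-t)))
          = ∫ t : ℝ in Ioi 0, ((t ^ (a - 1) * (Real.log t * Real.exp (-t)) : ℝ) : ℂ) :=
            setIntegral_congr_fun measurableSet_Ioi fun t ht => (key t ht).symm
        _ = _ := integral_ofReal
    rw [hIval] at hI
    have hGam : ∀ᶠ s in 𝓝 (a : ℂ), Complex.Gamma s = Complex.GammaIntegral s := by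
      filter_upwards [(isOpen_lt continuous_const Complex.continuous_re).mem_nhds hre] with s hs
      exact Complex.Gamma_eq_integral hs
    have hI2 : HasDerivAt Complex.Gamma (G' : ℂ) (a : ℂ) := hI.congr_of_eventuallyEq hGam
    have hR := hI2.real_of_complex
    simp only [Complex.ofReal_re] at hR
    have : (fun x : ℝ => (Complex.Gamma (x : ℂ)).re) = Real.Gamma := by
      funext x
      rw [Complex.Gamma_ofReal, Complex.ofReal_re]
    rwa [this] at hR

open Set in
/-- if `X ~ Gamma(α, β)` (shape `α`, rate `β`) then
`E[log X] = ψ(α) − log β`. -/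
theorem stmt_8 (a b : ℝ) (ha : 0 < a) (hb : 0 < b) :
    ∫ x, Real.log x ∂(gammaMeasure a b) = digamma a - Real.log b := by
  obtain ⟨hint, hderiv⟩ := gamma_deriv_aux a ha
  set G' : ℝ := ∫ t in Set.Ioi 0, t ^ (a - 1) * (Real.log t * Real.exp (-t)) with hG'
  have hΓpos : 0 < Real.Gamma a := Real.Gamma_pos_of_pos ha
  have hdig : digamma a = G' / Real.Gamma a := by
    unfold digamma
    exact (hderiv.log hΓpos.ne').deriv
  have h1 : ∫ x, Real.log x ∂(gammaMeasure a b)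
      = ∫ x, gammaPDFReal a b x * Real.log x := by
    unfold gammaMeasure
    rw [show gammaPDF a b = fun x => ((Real.toNNReal (gammaPDFReal a b x) : ℝ≥0) : ℝ≥0∞) from rfl]
    rw [integral_withDensity_eq_integral_smul ((measurable_gammaPDFReal a b).real_toNNReal) _]
    refine integral_congr_ae (Filter.Eventually.of_forall fun x => ?_)
    simp only [NNReal.smul_def, smul_eq_mul]
    rw [Real.coe_toNNReal _ (gammaPDFReal_nonneg ha hb x)]
  have h0ae : ∀ᵐ x : ℝ, x ≠ 0 := by
    rw [MeasureTheory.ae_iff]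
    simpa using measure_singleton (0 : ℝ)
  have h2 : ∫ x, gammaPDFReal a b x * Real.log x
      = ∫ x in Ioi 0, gammaPDFReal a b x * Real.log x := by
    symm
    apply setIntegral_eq_integral_of_ae_compl_eq_zero
    filter_upwards [h0ae] with x hx hxn
    have hlt : x < 0 := lt_of_le_of_ne (not_lt.mp (fun h => hxn (mem_Ioi.mpr h))) hx
    rw [gammaPDFReal, if_neg (not_le.mpr hlt), zero_mul]
  set c : ℝ := b ^ a / Real.Gamma a with hc
  set g : ℝ → ℝ := fun y => c * (y / b) ^ (a - 1) * Real.exp (-y) * Real.log (y / b) with hg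
  have h3 : ∫ x in Ioi 0, gammaPDFReal a b x * Real.log x
      = ∫ x in Ioi 0, g (b * x) := by
    refine setIntegral_congr_fun measurableSet_Ioi fun x hx => ?_
    rw [gammaPDFReal, if_pos (le_of_lt hx)]
    simp only [hg, hc, mul_div_cancel_left₀ _ hb.ne']
  have h5 : ∫ x in Ioi 0, g (b * x) = b⁻¹ • ∫ y in Ioi (b * 0), g y :=
    integral_comp_mul_left_Ioi g 0 hb
  have h6 : ∫ y in Ioi (0:ℝ), g y
      = (c / b ^ (a - 1)) *
        ∫ y in Ioi (0:ℝ), (y ^ (a - 1) * (Real.log y * Real.exp (-y))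
          - Real.log b * (Real.exp (-y) * y ^ (a - 1))) := by
    rw [← integral_const_mul]
    refine setIntegral_congr_fun measurableSet_Ioi fun y hy => ?_
    simp only [hg]
    rw [Real.div_rpow (le_of_lt hy) hb.le, Real.log_div (ne_of_gt hy) hb.ne']
    field_simp
  have hint2 : MeasureTheory.IntegrableOn
      (fun y : ℝ => Real.log b * (Real.exp (-y) * y ^ (a - 1))) (Ioi 0) :=
    (Real.GammaIntegral_convergent ha).const_mul _
  have h7 : ∫ y in Ioi (0:ℝ), (y ^ (a - 1) * (Real.log y * Real.exp (-y))
        - Real.log b * (Real.exp (-y) * y ^ (a - 1)))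
      = G' - Real.log b * Real.Gamma a := by
    rw [integral_sub hint hint2, integral_const_mul, ← Real.Gamma_eq_integral ha, ← hG']
  have hbb : b ^ a / b ^ (a - 1) = b := by
    rw [← Real.rpow_sub hb]
    norm_num
  have hcb : c / b ^ (a - 1) = b / Real.Gamma a := by
    rw [hc, div_right_comm, hbb]
  rw [h1, h2, h3, h5, mul_zero, h6, h7, hcb, hdig, smul_eq_mul]
  field_simp
end

section
/- Let A_1, …, A_d ∈ ℝ^{n×n} be symmetric positive semidefinite matrices and q_i(x) = ⟨x, A_i x⟩. Fix integers k ≥ 1 and m ≥ 1 with m·k ≤ d. If λ ≥ 0 is such that λ‖x‖^{2k} − E_k(q_1(x), …, q_d(x)) is a sum of squares of real polynomials in x = (x_1, …, x_n), then λ^m ‖x‖^{2mk} − E_{mk}(q_1(x), …, q_d(x)) is also a sum of squares. Consequently srel_{mk}(A) ≤ srel_k(A). -/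
open Matrix MvPolynomial

/-- The quadratic form `x ↦ xᵀ A x` as a polynomial. -/
noncomputable def quadFormPoly (n : ℕ) (A : Matrix (Fin n) (Fin n) ℝ) :
    MvPolynomial (Fin n) ℝ :=
  ∑ a, ∑ b, C (A a b) * X a * X b

/-- The polynomial `‖x‖² = ∑ xⱼ²`. -/
noncomputable def normSqPoly (n : ℕ) : MvPolynomial (Fin n) ℝ := ∑ j, X j ^ 2

/-- The normalized elementary symmetric polynomial
`E_k(q₁(x), …, q_d(x))` of the quadratic forms `qᵢ(x) = xᵀ Aᵢ x`. -/
noncomputable def esymQuadPoly (n d k : ℕ) (A : Fin d → Matrix (Fin n) (Fin n) ℝ) :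
    MvPolynomial (Fin n) ℝ :=
  C ((d.choose k : ℝ)⁻¹) *
    ∑ I ∈ Finset.powersetCard k (Finset.univ : Finset (Fin d)),
      ∏ i ∈ I, quadFormPoly n (A i)

/-- A polynomial is a sum of squares. -/
def IsSOS {n : ℕ} (p : MvPolynomial (Fin n) ℝ) : Prop :=
  ∃ (m : ℕ) (f : Fin m → MvPolynomial (Fin n) ℝ), p = ∑ j, (f j) ^ 2

/-- `srel_k(A)`, the degree-`k` Maclaurin relaxation value. -/
noncomputable def srel (n d k : ℕ) (A : Fin d → Matrix (Fin n) (Fin n) ℝ) : ℝ :=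
  (sInf {lam : ℝ | 0 ≤ lam ∧
      IsSOS (C lam * normSqPoly n ^ k - esymQuadPoly n d k A)}) ^ ((k : ℝ)⁻¹)


namespace IsSOS

variable {n : ℕ} {p q : MvPolynomial (Fin n) ℝ}

lemma zero : IsSOS (0 : MvPolynomial (Fin n) ℝ) := ⟨0, ![], by simp⟩

lemma sq (r : MvPolynomial (Fin n) ℝ) : IsSOS (r ^ 2) := ⟨1, ![r], by simp⟩

lemma add (hp : IsSOS p) (hq : IsSOS q) : IsSOS (p + q) := by
  obtain ⟨m1, f, rfl⟩ := hp
  obtain ⟨m2, g, rfl⟩ := hq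
  refine ⟨m1 + m2, Fin.addCases f g, ?_⟩
  rw [Fin.sum_univ_add]
  simp

lemma sq_mul (r : MvPolynomial (Fin n) ℝ) (hq : IsSOS q) : IsSOS (r ^ 2 * q) := by
  obtain ⟨m2, g, rfl⟩ := hq
  refine ⟨m2, fun j => r * g j, ?_⟩
  rw [Finset.mul_sum]
  exact Finset.sum_congr rfl fun j _ => by ring

lemma sum {α : Type*} (s : Finset α) (f : α → MvPolynomial (Fin n) ℝ)
    (h : ∀ a ∈ s, IsSOS (f a)) : IsSOS (∑ a ∈ s, f a) := by
  classical
  induction s using Finset.induction_on with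
  | empty => simpa using zero
  | insert _ _ hx ih =>
    rw [Finset.sum_insert hx]
    exact (h _ (Finset.mem_insert_self _ _)).add
      (ih fun a ha => h a (Finset.mem_insert_of_mem ha))

lemma mul (hp : IsSOS p) (hq : IsSOS q) : IsSOS (p * q) := by
  obtain ⟨m1, f, rfl⟩ := hp
  rw [Finset.sum_mul]
  exact sum _ _ fun j _ => sq_mul (f j) hq

lemma one : IsSOS (1 : MvPolynomial (Fin n) ℝ) := by
  simpa using sq (1 : MvPolynomial (Fin n) ℝ)

lemma pow (hp : IsSOS p) (k : ℕ) : IsSOS (p ^ k) := by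
  induction k with
  | zero => simpa using one
  | succ k ih => rw [pow_succ]; exact ih.mul hp

lemma prod {α : Type*} (s : Finset α) (f : α → MvPolynomial (Fin n) ℝ)
    (h : ∀ a ∈ s, IsSOS (f a)) : IsSOS (∏ a ∈ s, f a) := by
  classical
  induction s using Finset.induction_on with
  | empty => simpa using one
  | insert _ _ hx ih =>
    rw [Finset.prod_insert hx]
    exact (h _ (Finset.mem_insert_self _ _)).mul
      (ih fun a ha => h a (Finset.mem_insert_of_mem ha))

lemma C_nonneg {c : ℝ} (hc : 0 ≤ c) : IsSOS (C c : MvPolynomial (Fin n) ℝ) := by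
  have : (C c : MvPolynomial (Fin n) ℝ) = (C (Real.sqrt c)) ^ 2 := by
    rw [← map_pow, Real.sq_sqrt hc]
  rw [this]; exact sq _

lemma C_mul {c : ℝ} (hc : 0 ≤ c) (hp : IsSOS p) : IsSOS (C c * p) :=
  (C_nonneg hc).mul hp

lemma of_eq (hp : IsSOS p) (h : p = q) : IsSOS q := h ▸ hp

lemma half (h : IsSOS (p + p)) : IsSOS p := by
  have key : C (2⁻¹ : ℝ) * (p + p) = p := by
    have h2 : ((2 : MvPolynomial (Fin n) ℝ)) = C (2 : ℝ) := by
      exact (map_ofNat (C : ℝ →+* MvPolynomial (Fin n) ℝ) 2).symm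
    rw [← two_mul, ← mul_assoc, h2, ← MvPolynomial.C_mul, inv_mul_cancel₀ (two_ne_zero), C_1, one_mul]
  exact (C_mul (by norm_num) h).of_eq key

lemma nsmul (c : ℕ) (hp : IsSOS p) : IsSOS (c • p) := by
  have : (c : ℕ) • p = C (c : ℝ) * p := by
    rw [nsmul_eq_mul, ← map_natCast (C : ℝ →+* MvPolynomial (Fin n) ℝ) c]
  exact (C_mul (by positivity) hp).of_eq this.symm

end IsSOS

section SsumSection

open Finset Equiv

variable {n d : ℕ} (q : Fin d → MvPolynomial (Fin n) ℝ)

/-- Symmetrized monomial sum over all permutations. -/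
noncomputable def Ssum (a : Fin d → ℕ) : MvPolynomial (Fin n) ℝ :=
  ∑ π : Equiv.Perm (Fin d), ∏ l, q (π l) ^ a l

lemma Ssum_comp_perm (g : Fin d → ℕ) (ρ : Equiv.Perm (Fin d)) :
    Ssum q (fun l => g (ρ l)) = Ssum q g := by
  unfold Ssum
  refine Fintype.sum_equiv (Equiv.mulRight ρ.symm) _ _ fun π => ?_
  simp only [Equiv.coe_mulRight, Equiv.Perm.mul_apply]
  calc ∏ l, q (π l) ^ g (ρ l)
      = ∏ l, q (π (ρ.symm (ρ l))) ^ g (ρ l) := by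
        refine Finset.prod_congr rfl fun l _ => by rw [Equiv.symm_apply_apply]
    _ = ∏ l, q (π (ρ.symm l)) ^ g l := Equiv.prod_comp ρ fun l => q (π (ρ.symm l)) ^ g l

/-- 0/1 indicator exponent vector for the first `N` positions. -/
def bvec (d N : ℕ) : Fin d → ℕ := fun l => if (l : ℕ) < N then 1 else 0

lemma subtypeCongr_apply_pos {α : Type*} {p q' : α → Prop} [DecidablePred p] [DecidablePred q']
    (e : {x // p x} ≃ {x // q' x}) (f : {x // ¬p x} ≃ {x // ¬q' x}) (x : α) (h : p x) :
    Equiv.subtypeCongr e f x = ↑(e ⟨x, h⟩) := by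
  simp [Equiv.subtypeCongr, Equiv.sumCompl_symm_apply_of_pos h]

lemma subtypeCongr_apply_neg {α : Type*} {p q' : α → Prop} [DecidablePred p] [DecidablePred q']
    (e : {x // p x} ≃ {x // q' x}) (f : {x // ¬p x} ≃ {x // ¬q' x}) (x : α) (h : ¬ p x) :
    Equiv.subtypeCongr e f x = ↑(f ⟨x, h⟩) := by
  simp [Equiv.subtypeCongr, Equiv.sumCompl_symm_apply_of_neg h]

lemma card_subtype_lt {d N : ℕ} (hN : N ≤ d) :
    Fintype.card {x : Fin d // (x : ℕ) < N} = N := by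
  have e : {x : Fin d // (x : ℕ) < N} ≃ Fin N :=
    { toFun := fun x => ⟨(x : Fin d), x.2⟩
      invFun := fun y => ⟨⟨(y : ℕ), lt_of_lt_of_le y.2 hN⟩, y.2⟩
      left_inv := fun x => by ext; rfl
      right_inv := fun y => by ext; rfl }
  rw [Fintype.card_congr e, Fintype.card_fin]

lemma exists_perm_eq_bvec {d N : ℕ} (hN : N ≤ d) (a : Fin d → ℕ)
    (h01 : ∀ l, a l ≤ 1) (hsum : ∑ l, a l = N) :
    ∃ ρ : Equiv.Perm (Fin d), ∀ l, a (ρ l) = bvec d N l := by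
  classical
  have card2 : Fintype.card {x : Fin d // a x = 1} = N := by
    rw [Fintype.card_subtype]
    have := (Finset.sum_filter_add_sum_filter_not Finset.univ (fun l => a l = 1) a).symm
    rw [hsum] at this
    have h1 : ∑ l ∈ Finset.univ.filter (fun l => a l = 1), a l
        = (Finset.univ.filter (fun l => a l = 1)).card := by
      rw [Finset.sum_congr rfl fun l hl => (Finset.mem_filter.mp hl).2]
      simp
    have h2 : ∑ l ∈ Finset.univ.filter (fun l => ¬ a l = 1), a l = 0 := by
      refine Finset.sum_eq_zero fun l hl => ?_
      have := (Finset.mem_filter.mp hl).2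
      have := h01 l
      omega
    omega
  have card1 : Fintype.card {x : Fin d // (x : ℕ) < N} = N := card_subtype_lt hN
  have cardc : Fintype.card {x : Fin d // ¬ (x : ℕ) < N}
      = Fintype.card {x : Fin d // ¬ a x = 1} := by
    rw [Fintype.card_subtype_compl, Fintype.card_subtype_compl, card1, card2]
  have e1 : {x : Fin d // (x : ℕ) < N} ≃ {x : Fin d // a x = 1} :=
    Fintype.equivOfCardEq (card1.trans card2.symm)
  have e2 : {x : Fin d // ¬ (x : ℕ) < N} ≃ {x : Fin d // ¬ a x = 1} :=
    Fintype.equivOfCardEq cardc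
  refine ⟨Equiv.subtypeCongr e1 e2, fun l => ?_⟩
  by_cases h : (l : ℕ) < N
  · rw [subtypeCongr_apply_pos e1 e2 l h, (e1 ⟨l, h⟩).2]
    simp [bvec, h]
  · rw [subtypeCongr_apply_neg e1 e2 l h]
    have h1 := (e2 ⟨l, h⟩).2
    have h2 := h01 ↑(e2 ⟨l, h⟩)
    simp only [bvec, if_neg h]
    omega

lemma swap_step (hq : ∀ i, IsSOS (q i)) (a : Fin d → ℕ) (i j : Fin d) (hij : i ≠ j)
    (hai : 2 ≤ a i) (haj : a j = 0) :
    IsSOS (Ssum q a - Ssum q (Function.update (Function.update a i (a i - 1)) j 1)) := by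
  classical
  set c := a i with hc
  set a' : Fin d → ℕ := Function.update (Function.update a i (a i - 1)) j 1 with ha'
  have ha'i : a' i = c - 1 := by
    rw [ha', Function.update_of_ne hij, Function.update_self]
  have ha'j : a' j = 1 := by rw [ha', Function.update_self]
  have ha'l : ∀ l, l ≠ i → l ≠ j → a' l = a l := by
    intro l hli hlj
    rw [ha', Function.update_of_ne hlj, Function.update_of_ne hli]
  set τ := Equiv.swap i j with hτ
  set E : Finset (Fin d) := (Finset.univ.erase i).erase j with hE
  have hjmem : j ∈ Finset.univ.erase i := Finset.mem_erase.mpr ⟨fun h => hij h.symm, Finset.mem_univ j⟩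
  -- splitting of the full product
  have hsplit : ∀ (π : Equiv.Perm (Fin d)) (b : Fin d → ℕ),
      (∏ l, q (π l) ^ b l) = q (π i) ^ b i * (q (π j) ^ b j * ∏ l ∈ E, q (π l) ^ b l) := by
    intro π b
    rw [← Finset.mul_prod_erase Finset.univ _ (Finset.mem_univ i),
      ← Finset.mul_prod_erase _ _ hjmem, hE]
  have hsplitτ : ∀ (π : Equiv.Perm (Fin d)) (b : Fin d → ℕ),
      (∏ l, q ((π * τ) l) ^ b l) = q (π j) ^ b i * (q (π i) ^ b j * ∏ l ∈ E, q (π l) ^ b l) := by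
    intro π b
    rw [hsplit (π * τ) b]
    have h1 : (π * τ) i = π j := by
      simp [hτ, Equiv.Perm.mul_apply, Equiv.swap_apply_left]
    have h2 : (π * τ) j = π i := by
      simp [hτ, Equiv.Perm.mul_apply, Equiv.swap_apply_right]
    have h3 : ∀ l ∈ E, q ((π * τ) l) ^ b l = q (π l) ^ b l := by
      intro l hl
      obtain ⟨hlj, hli, -⟩ : l ≠ j ∧ l ≠ i ∧ True := by
        have h4 := Finset.mem_erase.mp hl
        have h5 := Finset.mem_erase.mp h4.2
        exact ⟨h4.1, h5.1, trivial⟩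
      rw [show (π * τ) l = π l by
        simp [hτ, Equiv.Perm.mul_apply, Equiv.swap_apply_of_ne_of_ne hli hlj]]
    rw [h1, h2, Finset.prod_congr rfl h3]
  -- the pairing identity
  have hpair : ∀ b : Fin d → ℕ, Ssum q b + Ssum q b
      = ∑ π : Equiv.Perm (Fin d), ((∏ l, q (π l) ^ b l) + (∏ l, q ((π * τ) l) ^ b l)) := by
    intro b
    rw [Finset.sum_add_distrib]
    congr 1
    refine Fintype.sum_equiv (Equiv.mulRight τ) _ _ fun π => ?_
    simp only [Equiv.coe_mulRight]
    congr 1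
    rw [mul_assoc, show τ * τ = 1 from Equiv.swap_mul_self i j, mul_one]
  -- per-permutation difference
  set G : MvPolynomial (Fin n) ℝ → MvPolynomial (Fin n) ℝ → MvPolynomial (Fin n) ℝ :=
    fun u v => ∑ s ∈ Finset.range (c - 1), u ^ s * v ^ (c - 1 - 1 - s) with hG
  have key : ∀ π : Equiv.Perm (Fin d),
      ((∏ l, q (π l) ^ a l) + (∏ l, q ((π * τ) l) ^ a l))
        - ((∏ l, q (π l) ^ a' l) + (∏ l, q ((π * τ) l) ^ a' l))
      = (q (π i) - q (π j)) ^ 2 * (G (q (π i)) (q (π j)) * ∏ l ∈ E, q (π l) ^ a l) := by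
    intro π
    have hRa' : (∏ l ∈ E, q (π l) ^ a' l) = (∏ l ∈ E, q (π l) ^ a l) := by
      refine Finset.prod_congr rfl fun l hl => ?_
      have h4 := Finset.mem_erase.mp hl
      have h5 := Finset.mem_erase.mp h4.2
      rw [ha'l l h5.1 h4.1]
    rw [hsplit π a, hsplit π a', hsplitτ π a, hsplitτ π a', hRa', ha'i, ha'j, haj]
    have hgeom := geom_sum₂_mul (q (π i)) (q (π j)) (c - 1)
    have hcc : c - 1 + 1 = c := by omega
    rw [← hc]
    rw [← hcc, pow_succ (q (π i)) (c - 1), pow_succ (q (π j)) (c - 1)]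
    simp only [pow_zero, pow_one, one_mul, Nat.add_sub_cancel]
    simp only [hG]
    linear_combination (-(∏ l ∈ E, q (π l) ^ a l) * (q (π i) - q (π j))) * hgeom
  -- summing up
  have hsum : ∑ π : Equiv.Perm (Fin d),
      (q (π i) - q (π j)) ^ 2 * (G (q (π i)) (q (π j)) * ∏ l ∈ E, q (π l) ^ a l)
      = (Ssum q a - Ssum q a') + (Ssum q a - Ssum q a') := by
    rw [Finset.sum_congr rfl fun π _ => (key π).symm, Finset.sum_sub_distrib,
      ← hpair a, ← hpair a']
    ring
  refine IsSOS.half ?_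
  refine (IsSOS.sum Finset.univ _ fun π _ => ?_).of_eq hsum
  refine IsSOS.sq_mul _ ?_
  refine IsSOS.mul ?_ ?_
  · exact IsSOS.sum _ _ fun s _ => ((hq _).pow s).mul ((hq _).pow _)
  · exact IsSOS.prod _ _ fun l _ => (hq _).pow _

lemma claimC (hq : ∀ i, IsSOS (q i)) {N : ℕ} (hN : N ≤ d) :
    ∀ (F : ℕ) (a : Fin d → ℕ), (∑ l, (a l) ^ 2) < F → (∑ l, a l = N) →
    IsSOS (Ssum q a - Ssum q (bvec d N)) := by
  intro F
  induction F with
  | zero => intro a h; omega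
  | succ F ih =>
    intro a hμ hsum
    by_cases h01 : ∀ l, a l ≤ 1
    · obtain ⟨ρ, hρ⟩ := exists_perm_eq_bvec hN a h01 hsum
      have hb : Ssum q (bvec d N) = Ssum q a := by
        have : Ssum q (fun l => a (ρ l)) = Ssum q a := Ssum_comp_perm q a ρ
        rw [← this]
        congr 1
        exact funext fun l => (hρ l).symm
      rw [hb, sub_self]
      exact IsSOS.zero
    · push_neg at h01
      obtain ⟨i, hi⟩ := h01
      have hai : 2 ≤ a i := hi
      have hj : ∃ j, a j = 0 := by
        by_contra hj
        push_neg at hj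
        have hall : ∀ l ∈ Finset.univ.erase i, 1 ≤ a l := fun l _ => by
          have := hj l; omega
        have h2 : (Finset.univ.erase i).card • 1 ≤ ∑ l ∈ Finset.univ.erase i, a l :=
          Finset.card_nsmul_le_sum _ _ _ hall
        have h3 : a i + ∑ l ∈ Finset.univ.erase i, a l = ∑ l, a l :=
          Finset.add_sum_erase _ _ (Finset.mem_univ i)
        have h4 : (Finset.univ.erase i).card = d - 1 := by
          rw [Finset.card_erase_of_mem (Finset.mem_univ i), Finset.card_univ, Fintype.card_fin]
        have hd : 1 ≤ d := le_trans (by omega : 1 ≤ N) hN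
        rw [h4] at h2
        simp only [smul_eq_mul, mul_one] at h2
        omega
      obtain ⟨j, haj⟩ := hj
      have hij : i ≠ j := fun h => by rw [h] at hai; omega
      set a' : Fin d → ℕ := Function.update (Function.update a i (a i - 1)) j 1 with ha'
      -- sum decompositions
      have hiej : i ∈ Finset.univ.erase j :=
        Finset.mem_erase.mpr ⟨hij, Finset.mem_univ i⟩
      have hdecomp : ∀ g : Fin d → ℕ, ∑ l, g l
          = g j + (g i + ∑ l ∈ (Finset.univ.erase j).erase i, g l) := by
        intro g
        rw [← Finset.add_sum_erase _ _ (Finset.mem_univ j), ← Finset.add_sum_erase _ _ hiej]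
      have ha'j : a' j = 1 := by rw [ha', Function.update_self]
      have ha'i : a' i = a i - 1 := by
        rw [ha', Function.update_of_ne hij, Function.update_self]
      have ha'l : ∀ l, l ≠ i → l ≠ j → a' l = a l := by
        intro l hli hlj
        rw [ha', Function.update_of_ne hlj, Function.update_of_ne hli]
      have hrest : ∑ l ∈ (Finset.univ.erase j).erase i, a' l
          = ∑ l ∈ (Finset.univ.erase j).erase i, a l := by
        refine Finset.sum_congr rfl fun l hl => ?_
        have h4 := Finset.mem_erase.mp hl
        have h5 := Finset.mem_erase.mp h4.2
        exact ha'l l h4.1 h5.1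
      have hrest2 : ∑ l ∈ (Finset.univ.erase j).erase i, (a' l) ^ 2
          = ∑ l ∈ (Finset.univ.erase j).erase i, (a l) ^ 2 := by
        refine Finset.sum_congr rfl fun l hl => ?_
        have h4 := Finset.mem_erase.mp hl
        have h5 := Finset.mem_erase.mp h4.2
        rw [ha'l l h4.1 h5.1]
      have hsum' : ∑ l, a' l = N := by
        have d1 := hdecomp a'
        have d2 := hdecomp a
        rw [ha'j, ha'i, hrest] at d1
        rw [haj] at d2
        omega
      have hμ' : ∑ l, (a' l) ^ 2 < F := by
        have d1 := hdecomp (fun l => (a' l) ^ 2)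
        have d2 := hdecomp (fun l => (a l) ^ 2)
        rw [ha'j, ha'i, hrest2] at d1
        rw [haj] at d2
        obtain ⟨cc, hcc⟩ : ∃ cc, a i = cc + 2 := ⟨a i - 2, by omega⟩
        rw [hcc] at d1 d2
        have e1 : (cc + 2 - 1) ^ 2 = cc * cc + 2 * cc + 1 := by
          have : cc + 2 - 1 = cc + 1 := by omega
          rw [this]; ring
        have e2 : (cc + 2) ^ 2 = cc * cc + 4 * cc + 4 := by ring
        rw [e1] at d1
        rw [e2] at d2
        omega
      have s1 : IsSOS (Ssum q a - Ssum q a') := swap_step q hq a i j hij hai haj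
      have s2 : IsSOS (Ssum q a' - Ssum q (bvec d N)) := ih a' hμ' hsum'
      exact (s1.add s2).of_eq (sub_add_sub_cancel _ _ _)

lemma Tset_card {d r : ℕ} (hr : r ≤ d) :
    ((Finset.univ : Finset (Fin d)).filter (fun l : Fin d => (l : ℕ) < r)).card = r := by
  have : (Finset.univ : Finset (Fin d)).filter (fun l : Fin d => (l : ℕ) < r)
      = Finset.map (Fin.castLEEmb hr) Finset.univ := by
    ext x
    rw [Finset.mem_filter, Finset.mem_map]
    constructor
    · intro h
      exact ⟨⟨(x : ℕ), h.2⟩, Finset.mem_univ _, by ext; rfl⟩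
    · rintro ⟨y, -, rfl⟩
      exact ⟨Finset.mem_univ _, y.2⟩
  rw [this, Finset.card_map, Finset.card_univ, Fintype.card_fin]

lemma prod_bvec' {M : Type*} [CommMonoid M] (f : Fin d → M) (r : ℕ) :
    (∏ l, f l ^ bvec d r l)
      = ∏ l ∈ Finset.univ.filter (fun l : Fin d => (l : ℕ) < r), f l := by
  rw [Finset.prod_filter]
  refine Finset.prod_congr rfl fun l _ => ?_
  by_cases h : (l : ℕ) < r
  · simp [bvec, h]
  · simp [bvec, h]

lemma prod_bvec (π : Equiv.Perm (Fin d)) (r : ℕ) :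
    (∏ l, q (π l) ^ bvec d r l)
      = ∏ l ∈ Finset.univ.filter (fun l : Fin d => (l : ℕ) < r), q (π l) :=
  prod_bvec' (fun l => q (π l)) r

noncomputable def fiber_equiv {d : ℕ} (T I : Finset (Fin d)) :
    {π : Equiv.Perm (Fin d) // T.image ⇑π = I}
      ≃ (({x // x ∈ T} ≃ {x // x ∈ I}) × ({x : Fin d // ¬ x ∈ T} ≃ {x : Fin d // ¬ x ∈ I})) := by
  classical
  have hmem : ∀ (π : Equiv.Perm (Fin d)), T.image ⇑π = I → ∀ x, x ∈ T → π x ∈ I := by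
    intro π h x hx
    rw [← h]
    exact Finset.mem_image_of_mem _ hx
  have hmem' : ∀ (π : Equiv.Perm (Fin d)), T.image ⇑π = I → ∀ x, π x ∈ I → x ∈ T := by
    intro π h x hx
    rw [← h] at hx
    obtain ⟨y, hy, hyx⟩ := Finset.mem_image.mp hx
    exact π.injective hyx ▸ hy
  have hiff : ∀ (π : Equiv.Perm (Fin d)), T.image ⇑π = I → ∀ x, x ∈ T ↔ π x ∈ I :=
    fun π h x => ⟨hmem π h x, hmem' π h x⟩
  exact
    { toFun := fun π =>
        (π.1.subtypeEquiv (hiff π.1 π.2),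
         π.1.subtypeEquiv (fun x => not_congr (hiff π.1 π.2 x)))
      invFun := fun ef =>
        ⟨Equiv.subtypeCongr ef.1 ef.2, by
          ext y
          constructor
          · intro hy
            obtain ⟨x, hx, rfl⟩ := Finset.mem_image.mp hy
            rw [subtypeCongr_apply_pos ef.1 ef.2 x hx]
            exact (ef.1 ⟨x, hx⟩).2
          · intro hy
            refine Finset.mem_image.mpr ⟨↑(ef.1.symm ⟨y, hy⟩), (ef.1.symm ⟨y, hy⟩).2, ?_⟩
            rw [subtypeCongr_apply_pos ef.1 ef.2 _ (ef.1.symm ⟨y, hy⟩).2]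
            rw [show (⟨↑(ef.1.symm ⟨y, hy⟩), (ef.1.symm ⟨y, hy⟩).2⟩ : {x // x ∈ T})
                = ef.1.symm ⟨y, hy⟩ from rfl, Equiv.apply_symm_apply]⟩
      left_inv := by
        rintro ⟨π, hπ⟩
        refine Subtype.ext ?_
        refine Equiv.ext fun x => ?_
        by_cases hx : x ∈ T
        · rw [subtypeCongr_apply_pos _ _ x hx]
          simp [Equiv.subtypeEquiv]
        · rw [subtypeCongr_apply_neg _ _ x hx]
          simp [Equiv.subtypeEquiv]
      right_inv := by
        rintro ⟨e, f⟩
        refine Prod.ext ?_ ?_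
        · refine Equiv.ext fun x => Subtype.ext ?_
          exact subtypeCongr_apply_pos e f ↑x x.2
        · refine Equiv.ext fun x => Subtype.ext ?_
          exact subtypeCongr_apply_neg e f ↑x x.2 }

lemma fiber_card {d r : ℕ} (hr : r ≤ d) (I : Finset (Fin d)) (hI : I.card = r) :
    (Finset.univ.filter (fun π : Equiv.Perm (Fin d) =>
        (Finset.univ.filter (fun l : Fin d => (l : ℕ) < r)).image ⇑π = I)).card
      = r.factorial * (d - r).factorial := by
  classical
  set T := (Finset.univ : Finset (Fin d)).filter (fun l : Fin d => (l : ℕ) < r) with hT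
  have hTcard : T.card = r := Tset_card hr
  rw [← Fintype.card_subtype]
  rw [Fintype.card_congr (fiber_equiv T I)]
  rw [Fintype.card_prod]
  have c1 : Fintype.card {x // x ∈ T} = r := by rw [Fintype.card_coe, hTcard]
  have c2 : Fintype.card {x // x ∈ I} = r := by rw [Fintype.card_coe, hI]
  have c3 : Fintype.card {x : Fin d // ¬ x ∈ T} = d - r := by
    rw [Fintype.card_subtype_compl, c1, Fintype.card_fin]
  have c4 : Fintype.card {x : Fin d // ¬ x ∈ I} = d - r := by
    rw [Fintype.card_subtype_compl, c2, Fintype.card_fin]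
  rw [Fintype.card_equiv (Fintype.equivOfCardEq (c1.trans c2.symm)),
    Fintype.card_equiv (Fintype.equivOfCardEq (c3.trans c4.symm)), c1, c3]

lemma alpha {r : ℕ} (hr : r ≤ d) :
    Ssum q (bvec d r) = (r.factorial * (d - r).factorial) •
      ∑ I ∈ Finset.powersetCard r (Finset.univ : Finset (Fin d)), ∏ i ∈ I, q i := by
  classical
  set T := (Finset.univ : Finset (Fin d)).filter (fun l : Fin d => (l : ℕ) < r) with hT
  have hTcard : T.card = r := Tset_card hr
  unfold Ssum
  rw [Finset.sum_congr rfl fun π _ => prod_bvec q π r]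
  have step2 : ∀ π : Equiv.Perm (Fin d), (∏ l ∈ T, q (π l)) = ∏ i ∈ T.image ⇑π, q i := by
    intro π
    exact (Finset.prod_image fun x _ y _ h => π.injective h).symm
  rw [Finset.sum_congr rfl fun π _ => step2 π]
  have hmaps : ∀ π ∈ (Finset.univ : Finset (Equiv.Perm (Fin d))),
      T.image ⇑π ∈ Finset.powersetCard r (Finset.univ : Finset (Fin d)) := by
    intro π _
    rw [Finset.mem_powersetCard_univ, Finset.card_image_of_injective _ π.injective, hTcard]
  rw [← Finset.sum_fiberwise_of_maps_to hmaps (fun π : Equiv.Perm (Fin d) => ∏ i ∈ T.image ⇑π, q i)]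
  rw [Finset.smul_sum]
  refine Finset.sum_congr rfl fun I hI => ?_
  have hIcard : I.card = r := Finset.mem_powersetCard_univ.mp hI
  calc ∑ π ∈ Finset.univ.filter (fun π : Equiv.Perm (Fin d) => T.image ⇑π = I),
        ∏ i ∈ T.image ⇑π, q i
      = ∑ π ∈ Finset.univ.filter (fun π : Equiv.Perm (Fin d) => T.image ⇑π = I),
        ∏ i ∈ I, q i := by
        refine Finset.sum_congr rfl fun π hπ => ?_
        rw [(Finset.mem_filter.mp hπ).2]
    _ = (r.factorial * (d - r).factorial) • ∏ i ∈ I, q i := by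
        rw [Finset.sum_const, fiber_card hr I hIcard]

lemma nsmul_eq_C_mul {n : ℕ} (c : ℕ) (p : MvPolynomial (Fin n) ℝ) :
    c • p = C (c : ℝ) * p := by
  rw [nsmul_eq_mul, ← map_natCast (C : ℝ →+* MvPolynomial (Fin n) ℝ) c]

lemma main_comb (hq : ∀ i, IsSOS (q i)) {k m : ℕ} (hk1 : 1 ≤ k) (hm : 1 ≤ m)
    (hmk : m * k ≤ d) :
    IsSOS ((C ((d.choose k : ℝ)⁻¹) *
        ∑ I ∈ Finset.powersetCard k (Finset.univ : Finset (Fin d)), ∏ i ∈ I, q i) ^ m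
      - C ((d.choose (m * k) : ℝ)⁻¹) *
        ∑ I ∈ Finset.powersetCard (m * k) (Finset.univ : Finset (Fin d)), ∏ i ∈ I, q i) := by
  classical
  have hk : k ≤ d := le_trans (Nat.le_mul_of_pos_left k hm) hmk
  set T := (Finset.univ : Finset (Fin d)).filter (fun l : Fin d => (l : ℕ) < k) with hT
  have hTcard : T.card = k := Tset_card hk
  set ek := ∑ I ∈ Finset.powersetCard k (Finset.univ : Finset (Fin d)), ∏ i ∈ I, q i with hek
  set emk := ∑ I ∈ Finset.powersetCard (m * k) (Finset.univ : Finset (Fin d)), ∏ i ∈ I, q i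
    with hemk
  set K := k.factorial * (d - k).factorial with hK
  set MK := (m * k).factorial * (d - m * k).factorial with hMK
  set Ag : (Fin m → Equiv.Perm (Fin d)) → Fin d → ℕ := fun g i =>
    ((Finset.univ ×ˢ T).filter (fun jl : Fin m × Fin d => g jl.1 jl.2 = i)).card with hAg
  have hsumAg : ∀ g, ∑ i, Ag g i = m * k := by
    intro g
    have := Finset.card_eq_sum_card_fiberwise
      (f := fun jl : Fin m × Fin d => g jl.1 jl.2) (s := Finset.univ ×ˢ T)
      (t := Finset.univ) (fun _ _ => Finset.mem_univ _)
    rw [Finset.card_product, Finset.card_univ, Fintype.card_fin, hTcard] at this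
    rw [hAg, ← this]
  have hProd : ∀ (g : Fin m → Equiv.Perm (Fin d)) (π : Equiv.Perm (Fin d)),
      (∏ jl ∈ Finset.univ ×ˢ T, q (π (g jl.1 jl.2))) = ∏ i, q (π i) ^ Ag g i := by
    intro g π
    rw [← Finset.prod_fiberwise_of_maps_to
      (g := fun jl : Fin m × Fin d => g jl.1 jl.2)
      (t := Finset.univ) (fun _ _ => Finset.mem_univ _)
      (fun jl : Fin m × Fin d => q (π (g jl.1 jl.2)))]
    refine Finset.prod_congr rfl fun i _ => ?_
    rw [Finset.prod_congr rfl (fun jl hjl => ?_), Finset.prod_const, hAg]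
    rw [(Finset.mem_filter.mp hjl).2]
  have hA : (Ssum q (bvec d k)) ^ m
      = ∑ g : Fin m → Equiv.Perm (Fin d), ∏ j, ∏ l, q (g j l) ^ bvec d k l := by
    rw [show Ssum q (bvec d k) ^ m = ∏ _j : Fin m, Ssum q (bvec d k) by
      rw [Finset.prod_const, Finset.card_univ, Fintype.card_fin]]
    unfold Ssum
    rw [Finset.prod_univ_sum]
    rw [Fintype.piFinset_univ]
  have hB : ∀ π : Equiv.Perm (Fin d),
      (∑ g : Fin m → Equiv.Perm (Fin d), ∏ j, ∏ l, q (g j l) ^ bvec d k l)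
      = ∑ g : Fin m → Equiv.Perm (Fin d), ∏ j, ∏ l, q (π (g j l)) ^ bvec d k l := by
    intro π
    refine Fintype.sum_equiv (Equiv.piCongrRight fun _ => Equiv.mulLeft π⁻¹) _ _ fun g => ?_
    refine Finset.prod_congr rfl fun j _ => Finset.prod_congr rfl fun l _ => ?_
    simp [Equiv.Perm.mul_apply]
  have hC : d.factorial • (Ssum q (bvec d k)) ^ m
      = ∑ g : Fin m → Equiv.Perm (Fin d), Ssum q (Ag g) := by
    calc d.factorial • (Ssum q (bvec d k)) ^ m
        = ∑ _π : Equiv.Perm (Fin d), (Ssum q (bvec d k)) ^ m := by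
          rw [Finset.sum_const, Finset.card_univ, Fintype.card_perm, Fintype.card_fin]
      _ = ∑ π : Equiv.Perm (Fin d), ∑ g : Fin m → Equiv.Perm (Fin d),
            ∏ j, ∏ l, q (π (g j l)) ^ bvec d k l := by
          refine Finset.sum_congr rfl fun π _ => ?_
          rw [hA, hB π]
      _ = ∑ g : Fin m → Equiv.Perm (Fin d), ∑ π : Equiv.Perm (Fin d),
            ∏ j, ∏ l, q (π (g j l)) ^ bvec d k l := Finset.sum_comm
      _ = ∑ g : Fin m → Equiv.Perm (Fin d), Ssum q (Ag g) := by
          refine Finset.sum_congr rfl fun g _ => Finset.sum_congr rfl fun π _ => ?_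
          calc (∏ j, ∏ l, q (π (g j l)) ^ bvec d k l)
              = ∏ j : Fin m, ∏ l ∈ T, q (π (g j l)) := by
                refine Finset.prod_congr rfl fun j _ => ?_
                rw [hT]
                exact prod_bvec' (fun l => q (π (g j l))) k
            _ = ∏ jl ∈ Finset.univ ×ˢ T, q (π (g jl.1 jl.2)) :=
                (Finset.prod_product' _ _ _).symm
            _ = ∏ i, q (π i) ^ Ag g i := hProd g π
  -- SOS part
  have hsos1 : ∀ g : Fin m → Equiv.Perm (Fin d),
      IsSOS (Ssum q (Ag g) - Ssum q (bvec d (m * k))) := fun g =>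
    claimC q hq hmk ((∑ l, (Ag g l) ^ 2) + 1) (Ag g) (Nat.lt_succ_self _) (hsumAg g)
  have hsos2 : IsSOS (d.factorial • (Ssum q (bvec d k)) ^ m
      - (d.factorial ^ m) • Ssum q (bvec d (m * k))) := by
    have heq : (∑ g : Fin m → Equiv.Perm (Fin d), (Ssum q (Ag g) - Ssum q (bvec d (m * k))))
        = d.factorial • (Ssum q (bvec d k)) ^ m - (d.factorial ^ m) • Ssum q (bvec d (m * k)) := by
      rw [Finset.sum_sub_distrib, ← hC, Finset.sum_const, Finset.card_univ,
        Fintype.card_fun, Fintype.card_perm, Fintype.card_fin, Fintype.card_fin]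
    exact (IsSOS.sum _ _ fun g _ => hsos1 g).of_eq heq
  rw [alpha q hk, alpha q hmk] at hsos2
  -- constants
  have hck : (d.choose k : ℝ) * (K : ℝ) = (d.factorial : ℝ) := by
    rw [hK]
    push_cast
    rw [← mul_assoc]
    exact_mod_cast congrArg (Nat.cast : ℕ → ℝ)
      (Nat.choose_mul_factorial_mul_factorial hk)
  have hcmk : (d.choose (m * k) : ℝ) * (MK : ℝ) = (d.factorial : ℝ) := by
    rw [hMK]
    push_cast
    rw [← mul_assoc]
    exact_mod_cast congrArg (Nat.cast : ℕ → ℝ)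
      (Nat.choose_mul_factorial_mul_factorial hmk)
  have hKpos : 0 < K := Nat.mul_pos (Nat.factorial_pos k) (Nat.factorial_pos (d - k))
  have hMKpos : 0 < MK := Nat.mul_pos (Nat.factorial_pos (m * k)) (Nat.factorial_pos (d - m * k))
  have hKne : (K : ℝ) ≠ 0 := by exact_mod_cast hKpos.ne'
  have hMKne : (MK : ℝ) ≠ 0 := by exact_mod_cast hMKpos.ne'
  have hchkne : (d.choose k : ℝ) ≠ 0 := Nat.cast_ne_zero.mpr (Nat.choose_pos hk).ne'
  have hchmkne : (d.choose (m * k) : ℝ) ≠ 0 := Nat.cast_ne_zero.mpr (Nat.choose_pos hmk).ne'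
  set t : ℝ := ((d.factorial : ℝ) ^ (m + 1))⁻¹ with hts
  have h1 : ((d.choose k : ℝ))⁻¹ ^ m = t * ((d.factorial : ℝ) * (K : ℝ) ^ m) := by
    rw [hts, show (d.factorial : ℝ) = (d.choose k : ℝ) * K from hck.symm]
    field_simp
    rw [div_pow, one_pow, mul_pow, div_mul_eq_mul_div, one_mul, div_eq_iff (pow_ne_zero _ hchkne)]
    ring
  have h2 : ((d.choose (m * k) : ℝ))⁻¹ = t * ((d.factorial : ℝ) ^ m * (MK : ℝ)) := by
    rw [hts, show (d.factorial : ℝ) = (d.choose (m * k) : ℝ) * MK from hcmk.symm]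
    field_simp
    ring
  have hgoal : (C ((d.choose k : ℝ)⁻¹) * ek) ^ m - C ((d.choose (m * k) : ℝ)⁻¹) * emk
      = C t * ((d.factorial • ((K • ek) ^ m)) - (d.factorial ^ m) • (MK • emk)) := by
    rw [nsmul_eq_C_mul K ek, nsmul_eq_C_mul MK emk,
      nsmul_eq_C_mul d.factorial ((C (K:ℝ) * ek) ^ m),
      nsmul_eq_C_mul (d.factorial ^ m) (C (MK:ℝ) * emk)]
    push_cast
    rw [mul_pow, ← map_pow (C : ℝ →+* MvPolynomial (Fin n) ℝ) ((d.choose k : ℝ))⁻¹ m, h1, h2]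
    simp only [MvPolynomial.C_mul, MvPolynomial.C_pow]
    ring
  have htpos : (0:ℝ) ≤ t := by rw [hts]; positivity
  exact (IsSOS.C_mul htpos hsos2).of_eq hgoal.symm

end SsumSection

lemma quadFormPoly_isSOS (n : ℕ) (A : Matrix (Fin n) (Fin n) ℝ) (hA : A.PosSemidef) :
    IsSOS (quadFormPoly n A) := by
  obtain ⟨B, rfl⟩ : ∃ B : Matrix (Fin n) (Fin n) ℝ, A = B.conjTranspose * B := by
    open scoped MatrixOrder in exact CStarAlgebra.nonneg_iff_eq_star_mul_self.mp hA.nonneg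
  have hAab : ∀ a b, (B.conjTranspose * B) a b = ∑ c, B c a * B c b := by
    intro a b
    simp [Matrix.mul_apply, Matrix.conjTranspose_apply]
  have hrepr : quadFormPoly n (B.conjTranspose * B) = ∑ c, (∑ a, C (B c a) * X a) ^ 2 := by
    calc quadFormPoly n (B.conjTranspose * B)
        = ∑ a, ∑ b, ∑ c, (C (B c a) * X a) * (C (B c b) * X b) := by
          refine Finset.sum_congr rfl fun a _ => Finset.sum_congr rfl fun b _ => ?_
          rw [hAab, map_sum, Finset.sum_mul, Finset.sum_mul]
          exact Finset.sum_congr rfl fun c _ => by rw [MvPolynomial.C_mul]; ring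
      _ = ∑ c, ∑ a, ∑ b, (C (B c a) * X a) * (C (B c b) * X b) := by
          rw [Finset.sum_congr rfl fun a _ => Finset.sum_comm, Finset.sum_comm]
      _ = ∑ c, (∑ a, C (B c a) * X a) ^ 2 := by
          refine Finset.sum_congr rfl fun c _ => ?_
          rw [sq, Finset.sum_mul_sum]
  exact ⟨n, _, hrepr⟩

lemma normSqPoly_isSOS (n : ℕ) : IsSOS (normSqPoly n) := ⟨n, fun j => X j, rfl⟩

lemma esymQuadPoly_isSOS (n d k : ℕ) (A : Fin d → Matrix (Fin n) (Fin n) ℝ)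
    (hA : ∀ i, (A i).PosSemidef) : IsSOS (esymQuadPoly n d k A) := by
  refine IsSOS.C_mul (by positivity) ?_
  exact IsSOS.sum _ _ fun I _ => IsSOS.prod _ _ fun i _ => quadFormPoly_isSOS n (A i) (hA i)

/-- Main step: the SOS certificate propagates from degree `k` to degree `m*k`. -/
lemma step_up (n d k m : ℕ) (hk : 1 ≤ k) (hm : 1 ≤ m) (hmk : m * k ≤ d)
    (A : Fin d → Matrix (Fin n) (Fin n) ℝ) (hA : ∀ i, (A i).PosSemidef)
    (lam : ℝ) (hlam : 0 ≤ lam)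
    (hsos : IsSOS (C lam * normSqPoly n ^ k - esymQuadPoly n d k A)) :
    IsSOS (C (lam ^ m) * normSqPoly n ^ (m * k) - esymQuadPoly n d (m * k) A) := by
  set X' : MvPolynomial (Fin n) ℝ := C lam * normSqPoly n ^ k with hX'
  set Y : MvPolynomial (Fin n) ℝ := esymQuadPoly n d k A with hY
  have hXsos : IsSOS X' := IsSOS.C_mul hlam ((normSqPoly_isSOS n).pow k)
  have hYsos : IsSOS Y := esymQuadPoly_isSOS n d k A hA
  have h1 : IsSOS (X' ^ m - Y ^ m) := by
    rw [← geom_sum₂_mul X' Y m]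
    exact (IsSOS.sum _ _ fun i _ => (hXsos.pow i).mul (hYsos.pow _)).mul hsos
  have h2 : IsSOS (Y ^ m - esymQuadPoly n d (m * k) A) := by
    rw [hY]
    unfold esymQuadPoly
    exact main_comb (fun i => quadFormPoly n (A i))
      (fun i => quadFormPoly_isSOS n (A i) (hA i)) hk hm hmk
  have hXm : X' ^ m = C (lam ^ m) * normSqPoly n ^ (m * k) := by
    rw [hX', mul_pow, ← map_pow, ← pow_mul, Nat.mul_comm k m]
  refine (h1.add h2).of_eq ?_
  rw [sub_add_sub_cancel, hXm]

/-- if `λ‖x‖^{2k} − E_k(q(x))` is SOS then so is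
`λ^m ‖x‖^{2mk} − E_{mk}(q(x))`; consequently `srel_{mk}(A) ≤ srel_k(A)`. -/
theorem stmt_11 (n d k m : ℕ) (hk : 1 ≤ k) (hm : 1 ≤ m) (hmk : m * k ≤ d)
    (A : Fin d → Matrix (Fin n) (Fin n) ℝ) (hA : ∀ i, (A i).PosSemidef)
    (lam : ℝ) (hlam : 0 ≤ lam)
    (hsos : IsSOS (C lam * normSqPoly n ^ k - esymQuadPoly n d k A)) :
    IsSOS (C (lam ^ m) * normSqPoly n ^ (m * k) - esymQuadPoly n d (m * k) A) ∧
    srel n d (m * k) A ≤ srel n d k A := by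
  refine ⟨step_up n d k m hk hm hmk A hA lam hlam hsos, ?_⟩
  set S1 : Set ℝ := {lam' : ℝ | 0 ≤ lam' ∧
      IsSOS (C lam' * normSqPoly n ^ k - esymQuadPoly n d k A)} with hS1
  set S2 : Set ℝ := {lam' : ℝ | 0 ≤ lam' ∧
      IsSOS (C lam' * normSqPoly n ^ (m * k) - esymQuadPoly n d (m * k) A)} with hS2
  have hlamS1 : lam ∈ S1 := ⟨hlam, hsos⟩
  have hS1ne : S1.Nonempty := ⟨lam, hlamS1⟩
  have hbdd1 : BddBelow S1 := ⟨0, fun x hx => hx.1⟩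
  have hbdd2 : BddBelow S2 := ⟨0, fun x hx => hx.1⟩
  have hmap : ∀ μ ∈ S1, μ ^ m ∈ S2 := fun μ hμ =>
    ⟨pow_nonneg hμ.1 m, step_up n d k m hk hm hmk A hA μ hμ.1 hμ.2⟩
  have hS2ne : S2.Nonempty := ⟨lam ^ m, hmap lam hlamS1⟩
  have hs0 : 0 ≤ sInf S1 := le_csInf hS1ne fun x hx => hx.1
  have hs20 : 0 ≤ sInf S2 := le_csInf hS2ne fun x hx => hx.1
  set f : ℝ → ℝ := fun x => (max x 0) ^ m with hf
  have hmono : Monotone f := fun x y h =>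
    pow_le_pow_left₀ (le_max_right _ _) (max_le_max h le_rfl) m
  have hcont : ContinuousAt f (sInf S1) :=
    ((continuous_id.max continuous_const).pow m).continuousAt
  have hkey : f (sInf S1) = sInf (f '' S1) :=
    hmono.map_csInf_of_continuousAt hcont hS1ne hbdd1
  have hfs : f (sInf S1) = (sInf S1) ^ m := by rw [hf]; simp [max_eq_left hs0]
  have himg : f '' S1 ⊆ S2 := by
    rintro x ⟨μ, hμ, rfl⟩
    have : f μ = μ ^ m := by rw [hf]; simp [max_eq_left hμ.1]
    rw [this]
    exact hmap μ hμ
  have himgne : (f '' S1).Nonempty := ⟨f lam, Set.mem_image_of_mem f hlamS1⟩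
  have hle : sInf S2 ≤ (sInf S1) ^ m := by
    rw [← hfs, hkey]
    exact csInf_le_csInf hbdd2 himgne himg
  have hmne : (m : ℝ) ≠ 0 := Nat.cast_ne_zero.mpr (by omega)
  have hkne : (k : ℝ) ≠ 0 := Nat.cast_ne_zero.mpr (by omega)
  calc srel n d (m * k) A
      = (sInf S2) ^ (((m * k : ℕ) : ℝ))⁻¹ := rfl
    _ ≤ ((sInf S1) ^ m) ^ (((m * k : ℕ) : ℝ))⁻¹ :=
        Real.rpow_le_rpow hs20 hle (by positivity)
    _ = srel n d k A := by
        show ((sInf S1) ^ m) ^ (((m * k : ℕ) : ℝ))⁻¹ = (sInf S1) ^ ((k : ℝ))⁻¹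
        rw [← Real.rpow_natCast (sInf S1) m, ← Real.rpow_mul hs0]
        congr 1
        push_cast
        field_simp
end

section
/- Let v_1, …, v_d ∈ ℝ^n be unit vectors and fix 1 ≤ k ≤ d. If λ ≥ 0 is such that λ‖x‖^{2k} − E_k(⟨v_1, x⟩^2, …, ⟨v_d, x⟩^2) is a sum of squares of real polynomials in x, then λ^{1/k} ≥ 1/(n + k − 1). Consequently the degree-k relaxation value OptSOS_k(A) of the instance A = (v_1 v_1^T, …, v_d v_d^T) satisfies OptSOS_k(A) ≥ 1/(n + k − 1). -/
open MvPolynomial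

/-- The linear form `x ↦ ⟨v, x⟩` as a polynomial. -/
noncomputable def linFormPoly (n : ℕ) (v : Fin n → ℝ) : MvPolynomial (Fin n) ℝ :=
  ∑ a, C (v a) * X a

/-- The normalized elementary symmetric polynomial
`E_k(⟨v₁,x⟩², …, ⟨v_d,x⟩²)`. -/
noncomputable def esymRankOnePoly (n d k : ℕ) (v : Fin d → Fin n → ℝ) :
    MvPolynomial (Fin n) ℝ :=
  C ((d.choose k : ℝ)⁻¹) *
    ∑ I ∈ Finset.powersetCard k (Finset.univ : Finset (Fin d)),
      ∏ i ∈ I, (linFormPoly n (v i)) ^ 2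

section Scaffold
open Finset

/-- 1-D Gaussian moments: `mm (2t) = (2t-1)!!`, odd moments vanish. -/
noncomputable def mm : ℕ → ℝ
  | 0 => 1
  | 1 => 0
  | (t+2) => (t+1) * mm t

theorem mm_nonneg : ∀ t, 0 ≤ mm t
  | 0 => by norm_num [mm]
  | 1 => by norm_num [mm]
  | (t+2) => by
      have h := mm_nonneg t
      simp only [mm]
      exact mul_nonneg (by positivity) h

/-- partial-matching counts -/
noncomputable def ff (a c : ℕ) : ℝ := (a.choose c : ℝ) * mm (a - c)

theorem ff_nonneg (a c : ℕ) : 0 ≤ ff a c :=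
  mul_nonneg (Nat.cast_nonneg _) (mm_nonneg _)

theorem ff_self (a : ℕ) : ff a a = 1 := by simp [ff, mm]

theorem ff_zero_right (a : ℕ) : ff a 0 = mm a := by simp [ff]

theorem ff_of_lt {a c : ℕ} (h : a < c) : ff a c = 0 := by
  simp [ff, Nat.choose_eq_zero_of_lt h]

theorem ff_one_right : ∀ c, c ≠ 1 → ff 1 c = 0
  | 0, h => by simp [ff, mm]
  | 1, h => absurd rfl h
  | (c+2), h => ff_of_lt (by omega)

theorem ff_succ_mul (a c : ℕ) : (c+1 : ℝ) * ff a (c+1) = a * ff (a-1) c := by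
  cases a with
  | zero => simp [ff_of_lt (Nat.succ_pos c)]
  | succ a =>
    have h : ((a+1).choose (c+1) : ℝ) * (c+1 : ℝ) = ((a:ℝ)+1) * (a.choose c : ℝ) := by
      exact_mod_cast congrArg (Nat.cast (R := ℝ)) (Nat.add_one_mul_choose_eq a c).symm
    simp only [ff]
    have h1 : (a+1) - (c+1) = a - c := by omega
    have h2 : (a+1) - 1 = a := by omega
    rw [h1, h2]
    push_cast
    linear_combination mm (a-c) * h

theorem ff_step0 (b : ℕ) : ff (b+2) 0 = (b+1) * ff b 0 := by
  simp only [ff, Nat.choose_zero_right, Nat.sub_zero, Nat.cast_one, one_mul]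
  show mm (b+2) = _
  simp [mm]

theorem choose_aux (b c : ℕ) : ((b+1).choose (c+1) : ℝ) * ((b:ℝ) - c) = ((b:ℝ)+1) * (b.choose (c+1) : ℝ) := by
  rcases le_or_gt (c+1) b with h | h
  · have h1 : (b+1).choose (c+2) * (c+2) = (b+1).choose (c+1) * ((b+1) - (c+1)) :=
      Nat.choose_succ_right_eq (b+1) (c+1)
    have h2 : (b+1) * b.choose (c+1) = (b+1).choose (c+2) * (c+2) := Nat.add_one_mul_choose_eq b (c+1)
    have h3 : (b+1).choose (c+1) * ((b+1) - (c+1)) = (b+1) * b.choose (c+1) := h1.symm.trans h2.symm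
    have h4 : (((b+1).choose (c+1) : ℝ)) * (((b+1) - (c+1) : ℕ) : ℝ) = ((b:ℝ)+1) * (b.choose (c+1) : ℝ) := by
      exact_mod_cast congrArg (Nat.cast (R := ℝ)) h3
    have h5 : (((b+1) - (c+1) : ℕ) : ℝ) = (b:ℝ) - c := by
      have hcb : c ≤ b := by omega
      have : (b+1) - (c+1) = b - c := by omega
      rw [this, Nat.cast_sub hcb]
    rw [← h5]; exact h4
  · have hz : b.choose (c+1) = 0 := Nat.choose_eq_zero_of_lt (by omega)
    rcases Nat.lt_or_ge (b+1) (c+1) with h' | h'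
    · have hz2 : (b+1).choose (c+1) = 0 := Nat.choose_eq_zero_of_lt h'
      simp [hz, hz2]
    · have hb : b = c := by omega
      subst hb
      simp [hz, Nat.choose_self]

theorem ff_step (b c : ℕ) : ff (b+2) (c+1) = ff (b+1) c + (b+1) * ff b (c+1) := by
  have hpascal : ((b+2).choose (c+1) : ℝ) = ((b+1).choose c : ℝ) + ((b+1).choose (c+1) : ℝ) := by
    exact_mod_cast congrArg (Nat.cast (R := ℝ)) (Nat.choose_succ_succ (b+1) c)
  have hsub : (b+2) - (c+1) = (b+1) - c := by omega
  simp only [ff, hpascal, hsub, add_mul]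
  congr 1
  -- ⊢ (b+1).choose (c+1) * mm ((b+1) - c) = (b+1) * (b.choose (c+1) * mm (b - (c+1)))
  rcases le_or_gt (c+1) b with h | h
  · have h2 : (b+1) - c = (b - (c+1)) + 2 := by omega
    rw [h2]
    have hmm : mm ((b - (c+1)) + 2) = ((b - (c+1) : ℕ) + 1 : ℕ) * mm (b - (c+1)) := by
      simp [mm]
    rw [hmm]
    have hbc : (((b - (c+1) : ℕ) + 1 : ℕ) : ℝ) = (b:ℝ) - c := by
      push_cast [Nat.cast_sub (show c+1 ≤ b from h)]
      ring
    rw [hbc]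
    linear_combination mm (b - (c+1)) * choose_aux b c
  · have hz : b.choose (c+1) = 0 := Nat.choose_eq_zero_of_lt (by omega)
    rcases Nat.lt_or_ge (b+1) (c+1) with h' | h'
    · have hz2 : (b+1).choose (c+1) = 0 := Nat.choose_eq_zero_of_lt h'
      simp [hz, hz2]
    · have hb : b = c := by omega
      subst hb
      have h1 : (b+1) - b = 1 := by omega
      simp [hz, Nat.choose_self, h1, mm]

theorem mm_add : ∀ b a N, a + b + 1 ≤ N →
    mm (a+b) = ∑ c ∈ range N, (c.factorial : ℝ) * ff a c * ff b c
  | 0, a, N, hN => by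
    rw [Finset.sum_eq_single 0]
    · simp [ff_zero_right, show mm 0 = 1 by simp [mm]]
    · intro c _ hne
      rw [ff_of_lt (show (0:ℕ) < c by omega)]
      ring
    · intro h0
      exact absurd (Finset.mem_range.mpr (by omega)) h0
  | 1, a, N, hN => by
    rw [Finset.sum_eq_single 1]
    · have : ff a 1 = (a:ℝ) * mm (a-1) := by
        simp [ff, Nat.choose_one_right]
      rw [this]
      cases a with
      | zero => simp [mm, ff_self]
      | succ a =>
        have h1 : a + 1 - 1 = a := by omega
        rw [h1, ff_self]
        have hm : mm (a+1+1) = ((a:ℝ)+1) * mm a := by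
          show mm (a+2) = _
          simp [mm]
        rw [hm]
        simp [Nat.factorial_one]
    · intro c _ hne
      rw [ff_one_right c hne]
      ring
    · intro h0
      exact absurd (Finset.mem_range.mpr (by omega)) h0
  | (b+2), a, N, hN => by
    obtain ⟨M, rfl⟩ : ∃ M, N = M + 1 := ⟨N - 1, by omega⟩
    rw [Finset.sum_range_succ']
    have e1 : ∀ c ∈ range M, ((c+1 : ℕ).factorial : ℝ) * ff a (c+1) * ff (b+2) (c+1)
        = (a:ℝ) * ((c.factorial : ℝ) * ff (a-1) c * ff (b+1) c)
          + ((b:ℝ)+1) * (((c+1 : ℕ).factorial : ℝ) * ff a (c+1) * ff b (c+1)) := by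
      intro c _
      rw [ff_step]
      have hf : ((c+1 : ℕ).factorial : ℝ) = ((c:ℝ)+1) * (c.factorial : ℝ) := by
        push_cast [Nat.factorial_succ]; ring
      have h2 := ff_succ_mul a c
      linear_combination (ff (b+1) c * (c.factorial:ℝ)) * h2
        + (ff a (c+1) * ff (b+1) c) * hf
    rw [Finset.sum_congr rfl e1, Finset.sum_add_distrib, ← Finset.mul_sum, ← Finset.mul_sum]
    have IH1 : (∑ c ∈ range M, (c.factorial : ℝ) * ff (a-1) c * ff (b+1) c)
        = mm ((a-1) + (b+1)) := (mm_add (b+1) (a-1) M (by omega)).symm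
    have IH2 : (∑ c ∈ range (M+1), (c.factorial : ℝ) * ff a c * ff b c) = mm (a+b) :=
      (mm_add b a (M+1) (by omega)).symm
    have hshift : (∑ c ∈ range M, ((c+1:ℕ).factorial : ℝ) * ff a (c+1) * ff b (c+1))
        = mm (a+b) - ((0:ℕ).factorial : ℝ) * ff a 0 * ff b 0 := by
      rw [← IH2, Finset.sum_range_succ']
      ring
    rw [IH1, hshift]
    have ha : (a:ℝ) * mm ((a-1) + (b+1)) = (a:ℝ) * mm (a+b) := by
      cases a with
      | zero => simp
      | succ a =>
        have : (a+1-1) + (b+1) = (a+1) + b := by omega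
        rw [this]
    rw [ha, ff_step0, ff_zero_right, ff_zero_right]
    have hL : a + (b+2) = (a+b) + 2 := by omega
    rw [hL]
    have hm : mm ((a+b)+2) = (((a+b:ℕ) : ℝ)+1) * mm (a+b) := by simp [mm]
    rw [hm]
    push_cast
    ring

section Multi
variable {n : ℕ}

/-- product Gaussian moment of a multi-exponent -/
noncomputable def MMom (α : Fin n →₀ ℕ) : ℝ := ∏ i, mm (α i)

/-- the Gaussian-moment pseudo-expectation functional -/
noncomputable def LL (p : MvPolynomial (Fin n) ℝ) : ℝ :=
  ∑ α ∈ p.support, coeff α p * MMom α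

noncomputable def factM (α : Fin n →₀ ℕ) : ℝ := ∏ i, ((α i).factorial : ℝ)

noncomputable def FFc (α : Fin n →₀ ℕ) (c : Fin n → ℕ) : ℝ := ∏ i, ff (α i) (c i)

theorem factM_nonneg (α : Fin n →₀ ℕ) : 0 ≤ factM α :=
  Finset.prod_nonneg fun i _ => Nat.cast_nonneg _

theorem LL_eq_sum_subset {p : MvPolynomial (Fin n) ℝ} {S : Finset (Fin n →₀ ℕ)}
    (h : p.support ⊆ S) : LL p = ∑ α ∈ S, coeff α p * MMom α := by
  unfold LL
  apply Finset.sum_subset h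
  intro α _ hα
  rw [MvPolynomial.notMem_support_iff.mp hα, zero_mul]

theorem LL_zero : LL (0 : MvPolynomial (Fin n) ℝ) = 0 := by
  simp [LL]

theorem LL_add (p q : MvPolynomial (Fin n) ℝ) : LL (p + q) = LL p + LL q := by
  rw [LL_eq_sum_subset (S := p.support ∪ q.support ∪ (p+q).support) (by intro x hx; exact Finset.mem_union_right _ hx),
     LL_eq_sum_subset (p := p) (S := p.support ∪ q.support ∪ (p+q).support)
       (by intro x hx; exact Finset.mem_union_left _ (Finset.mem_union_left _ hx)),
     LL_eq_sum_subset (p := q) (S := p.support ∪ q.support ∪ (p+q).support)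
       (by intro x hx; exact Finset.mem_union_left _ (Finset.mem_union_right _ hx)),
     ← Finset.sum_add_distrib]
  apply Finset.sum_congr rfl
  intro α _
  rw [coeff_add]
  ring

theorem LL_sum {ι : Type*} (s : Finset ι) (f : ι → MvPolynomial (Fin n) ℝ) :
    LL (∑ j ∈ s, f j) = ∑ j ∈ s, LL (f j) := by
  classical
  induction s using Finset.induction_on with
  | empty => simp [LL_zero]
  | insert _ _ hns ih =>
    rw [Finset.sum_insert hns, LL_add, ih, Finset.sum_insert hns]

theorem LL_neg (p : MvPolynomial (Fin n) ℝ) : LL (-p) = - LL p := by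
  unfold LL
  rw [MvPolynomial.support_neg, ← Finset.sum_neg_distrib]
  apply Finset.sum_congr rfl
  intro α _
  rw [MvPolynomial.coeff_neg]
  ring

theorem LL_sub (p q : MvPolynomial (Fin n) ℝ) : LL (p - q) = LL p - LL q := by
  rw [sub_eq_add_neg, LL_add, LL_neg, sub_eq_add_neg]

theorem LL_monomial (γ : Fin n →₀ ℕ) (r : ℝ) : LL (monomial γ r) = r * MMom γ := by
  unfold LL
  rcases eq_or_ne r 0 with rfl | hr
  · simp
  · rw [MvPolynomial.support_monomial, if_neg hr, Finset.sum_singleton, coeff_monomial, if_pos rfl]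

theorem LL_C_mul (r : ℝ) (p : MvPolynomial (Fin n) ℝ) : LL (C r * p) = r * LL p := by
  rcases eq_or_ne r 0 with rfl | hr
  · simp [LL_zero]
  · have hs : (C r * p).support = p.support := by
      ext α
      simp [MvPolynomial.mem_support_iff, coeff_C_mul, hr]
    unfold LL
    rw [hs, Finset.mul_sum]
    apply Finset.sum_congr rfl
    intro α _
    rw [coeff_C_mul]
    ring

theorem LL_mul_expand (p q : MvPolynomial (Fin n) ℝ) :
    LL (p * q) = ∑ α ∈ p.support, ∑ β ∈ q.support,
      coeff α p * coeff β q * MMom (α + β) := by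
  have hpq : p * q = ∑ α ∈ p.support, ∑ β ∈ q.support,
      monomial (α + β) (coeff α p * coeff β q) := by
    conv_lhs => rw [p.as_sum, q.as_sum]
    rw [Finset.sum_mul_sum]
    apply Finset.sum_congr rfl
    intro α _
    apply Finset.sum_congr rfl
    intro β _
    rw [monomial_mul]
  rw [hpq, LL_sum]
  apply Finset.sum_congr rfl
  intro α _
  rw [LL_sum]
  apply Finset.sum_congr rfl
  intro β _
  rw [LL_monomial]

theorem MMom_add_expand (N : ℕ) (α β : Fin n →₀ ℕ) (h : ∀ i, α i + β i + 1 ≤ N) :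
    MMom (α + β) = ∑ c ∈ Fintype.piFinset (fun _ : Fin n => range N),
      (∏ i, ((c i).factorial : ℝ)) * FFc α c * FFc β c := by
  unfold MMom FFc
  have h1 : ∀ i : Fin n, mm ((α + β) i)
      = ∑ c ∈ range N, (c.factorial : ℝ) * ff (α i) c * ff (β i) c := by
    intro i
    rw [Finsupp.add_apply]
    exact mm_add (β i) (α i) N (h i)
  rw [Finset.prod_congr rfl (fun i _ => h1 i), Finset.prod_univ_sum]
  apply Finset.sum_congr rfl
  intro c _
  rw [← Finset.prod_mul_distrib, ← Finset.prod_mul_distrib]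

/-- the square decomposition of the pseudo-expectation of a square -/
theorem LL_sq_eq (q : MvPolynomial (Fin n) ℝ) (N : ℕ)
    (hN : ∀ α ∈ q.support, ∀ i, 2 * α i + 1 ≤ N) :
    LL (q * q) = ∑ c ∈ Fintype.piFinset (fun _ : Fin n => range N),
      (∏ i, ((c i).factorial : ℝ)) * (∑ α ∈ q.support, coeff α q * FFc α c)^2 := by
  rw [LL_mul_expand]
  have step1 : ∀ α ∈ q.support, ∀ β ∈ q.support,
      coeff α q * coeff β q * MMom (α + β)
      = ∑ c ∈ Fintype.piFinset (fun _ : Fin n => range N),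
          (∏ i, ((c i).factorial : ℝ)) * (coeff α q * FFc α c) * (coeff β q * FFc β c) := by
    intro α hα β hβ
    rw [MMom_add_expand N α β (fun i => by
      have h1 := hN α hα i
      have h2 := hN β hβ i
      omega), Finset.mul_sum]
    apply Finset.sum_congr rfl
    intro c _
    ring
  rw [Finset.sum_congr rfl (fun α hα => Finset.sum_congr rfl (fun β hβ => step1 α hα β hβ))]
  rw [Finset.sum_congr rfl (fun α _ => Finset.sum_comm), Finset.sum_comm]
  apply Finset.sum_congr rfl
  intro c _
  rw [sq, Finset.sum_mul_sum, Finset.mul_sum]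
  apply Finset.sum_congr rfl
  intro α _
  rw [Finset.mul_sum]
  apply Finset.sum_congr rfl
  intro β _
  ring

theorem exp_le_totalDegree {q : MvPolynomial (Fin n) ℝ} {α : Fin n →₀ ℕ}
    (hα : α ∈ q.support) (i : Fin n) : α i ≤ q.totalDegree := by
  refine le_trans ?_ (MvPolynomial.le_totalDegree hα)
  rcases eq_or_ne (α i) 0 with h0 | h0
  · omega
  · rw [Finsupp.sum]
    exact Finset.single_le_sum (fun j _ => Nat.zero_le _) (Finsupp.mem_support_iff.mpr h0)

theorem LL_sq_nonneg (q : MvPolynomial (Fin n) ℝ) : 0 ≤ LL (q * q) := by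
  rw [LL_sq_eq q (2 * q.totalDegree + 1)
    (fun α hα i => by have := exp_le_totalDegree hα i; omega)]
  apply Finset.sum_nonneg
  intro c _
  apply mul_nonneg
  · exact Finset.prod_nonneg fun i _ => Nat.cast_nonneg _
  · exact sq_nonneg _

noncomputable def BB (q : MvPolynomial (Fin n) ℝ) : ℝ :=
  ∑ α ∈ q.support, (coeff α q)^2 * factM α

theorem BB_nonneg (q : MvPolynomial (Fin n) ℝ) : 0 ≤ BB q :=
  Finset.sum_nonneg fun α _ => mul_nonneg (sq_nonneg _) (factM_nonneg α)

theorem sum_univ_eq_of_homog {q : MvPolynomial (Fin n) ℝ} {k : ℕ} (hq : q.IsHomogeneous k)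
    {α : Fin n →₀ ℕ} (hα : α ∈ q.support) : ∑ i, α i = k := by
  have h := hq (MvPolynomial.mem_support_iff.mp hα)
  rw [Finsupp.weight_apply] at h
  rw [← h, Finsupp.sum_fintype]
  · exact Finset.sum_congr rfl fun i _ => by simp
  · intro i; simp

theorem FFc_coe_eq {k : ℕ} (α α₀ : Fin n →₀ ℕ) (hα : ∑ i, α i = k) (hα₀ : ∑ i, α₀ i = k) :
    FFc α ⇑α₀ = if α = α₀ then 1 else 0 := by
  rcases eq_or_ne α α₀ with rfl | hne
  · rw [if_pos rfl]
    unfold FFc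
    rw [Finset.prod_congr rfl (fun i _ => ff_self (α i))]
    exact Finset.prod_const_one
  · rw [if_neg hne]
    have hex : ∃ i, α i < α₀ i := by
      by_contra hcon
      push_neg at hcon
      have hle : ∀ i ∈ (Finset.univ : Finset (Fin n)), α₀ i ≤ α i := fun i _ => hcon i
      have heq := (Finset.sum_eq_sum_iff_of_le hle).mp (by rw [hα, hα₀])
      exact hne (Finsupp.ext fun i => (heq i (Finset.mem_univ i)).symm)
    obtain ⟨i, hi⟩ := hex
    exact Finset.prod_eq_zero (Finset.mem_univ i) (ff_of_lt hi)

/-- key lower bound: the pseudo-expectation of the square of a homogeneous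
polynomial is at least its Bombieri-type norm. -/
theorem BB_le_LL_sq {q : MvPolynomial (Fin n) ℝ} {k : ℕ} (hq : q.IsHomogeneous k) :
    BB q ≤ LL (q * q) := by
  classical
  set N := 2 * q.totalDegree + 1 with hNdef
  rw [LL_sq_eq q N (fun α hα i => by have := exp_le_totalDegree hα i; omega)]
  set box := Fintype.piFinset (fun _ : Fin n => range N) with hbox
  set G := q.support.image (fun α : Fin n →₀ ℕ => ⇑α) with hG
  have hGbox : G ⊆ box := by
    intro c hc
    rw [hG, Finset.mem_image] at hc
    obtain ⟨α, hα, rfl⟩ := hc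
    rw [hbox, Fintype.mem_piFinset]
    intro i
    rw [Finset.mem_range]
    have := exp_le_totalDegree hα i
    omega
  have hterm : ∀ c : Fin n → ℕ, 0 ≤ (∏ i, ((c i).factorial : ℝ)) *
      (∑ α ∈ q.support, coeff α q * FFc α c)^2 := by
    intro c
    exact mul_nonneg (Finset.prod_nonneg fun i _ => Nat.cast_nonneg _) (sq_nonneg _)
  refine le_trans ?_ (Finset.sum_le_sum_of_subset_of_nonneg hGbox (fun c _ _ => hterm c))
  rw [hG, Finset.sum_image (by
    intro x _ y _ hxy
    exact DFunLike.coe_injective hxy)]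
  unfold BB
  apply le_of_eq
  apply Finset.sum_congr rfl
  intro a0 ha0
  have hin : (∑ α ∈ q.support, coeff α q * FFc α ⇑a0) = coeff a0 q := by
    rw [Finset.sum_eq_single a0]
    · rw [FFc_coe_eq (k := k) a0 a0 (sum_univ_eq_of_homog hq ha0) (sum_univ_eq_of_homog hq ha0),
        if_pos rfl, mul_one]
    · intro α hα hne
      rw [FFc_coe_eq (k := k) α a0 (sum_univ_eq_of_homog hq hα) (sum_univ_eq_of_homog hq ha0),
        if_neg hne, mul_zero]
    · intro h
      exact absurd ha0 h
  rw [hin]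
  unfold factM
  ring


theorem mm_step : ∀ t : ℕ, mm (t+2) = mm t + (t:ℝ) * ((t-1 : ℕ):ℝ) * mm (t-2)
  | 0 => by simp [mm]
  | 1 => by simp [mm]
  | (t+2) => by
    have e1 : (t+2) - 1 = t+1 := by omega
    have e2 : (t+2) - 2 = t := by omega
    rw [e1, e2]
    simp only [mm]
    push_cast
    ring

theorem LL_one : LL (1 : MvPolynomial (Fin n) ℝ) = 1 := by
  have h : (1 : MvPolynomial (Fin n) ℝ) = monomial 0 1 := by
    rw [monomial_zero']
    simp
  rw [h, LL_monomial]
  unfold MMom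
  simp [mm]

theorem LL_Xsq_mul_monomial (j : Fin n) (γ : Fin n →₀ ℕ) (r : ℝ) :
    LL (X j ^ 2 * monomial γ r)
      = LL (monomial γ r) + LL (pderiv j (pderiv j (monomial γ r))) := by
  classical
  rw [X_pow_eq_monomial, monomial_mul, one_mul, pderiv_monomial, pderiv_monomial,
    LL_monomial, LL_monomial, LL_monomial]
  have hjj : ((γ - Finsupp.single j 1 : Fin n →₀ ℕ)) j = γ j - 1 := by
    rw [Finsupp.tsub_apply, Finsupp.single_eq_same]
  rw [hjj]
  -- split products over j and its complement
  have split : ∀ δ : Fin n →₀ ℕ, MMom δ = mm (δ j) * ∏ i ∈ ({j}ᶜ : Finset (Fin n)), mm (δ i) :=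
    fun δ => Fintype.prod_eq_mul_prod_compl j _
  have offdiag : ∀ (δ : Fin n →₀ ℕ), (∀ i, i ≠ j → δ i = γ i) →
      ∏ i ∈ ({j}ᶜ : Finset (Fin n)), mm (δ i) = ∏ i ∈ ({j}ᶜ : Finset (Fin n)), mm (γ i) := by
    intro δ hδ
    apply Finset.prod_congr rfl
    intro i hi
    rw [hδ i (by simpa using hi)]
  have h1 : MMom (Finsupp.single j 2 + γ)
      = mm (γ j + 2) * ∏ i ∈ ({j}ᶜ : Finset (Fin n)), mm (γ i) := by
    rw [split, offdiag]
    · congr 2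
      rw [Finsupp.add_apply, Finsupp.single_eq_same, add_comm]
    · intro i hi
      rw [Finsupp.add_apply, Finsupp.single_apply, if_neg (fun h => hi h.symm), zero_add]
  have h2 : MMom ((γ - Finsupp.single j 1 - Finsupp.single j 1 : Fin n →₀ ℕ))
      = mm (γ j - 2) * ∏ i ∈ ({j}ᶜ : Finset (Fin n)), mm (γ i) := by
    rw [split, offdiag]
    · congr 2
      rw [Finsupp.tsub_apply, Finsupp.tsub_apply, Finsupp.single_eq_same]
      omega
    · intro i hi
      rw [Finsupp.tsub_apply, Finsupp.tsub_apply, Finsupp.single_apply,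
        if_neg (fun h => hi h.symm)]
      omega
  have h3 : MMom γ = mm (γ j) * ∏ i ∈ ({j}ᶜ : Finset (Fin n)), mm (γ i) := split γ
  rw [h1, h2, h3]
  linear_combination (r * (∏ i ∈ ({j}ᶜ : Finset (Fin n)), mm (γ i))) * mm_step (γ j)

theorem LL_Xsq_mul (j : Fin n) (p : MvPolynomial (Fin n) ℝ) :
    LL (X j ^ 2 * p) = LL p + LL (pderiv j (pderiv j p)) := by
  have hp : X j ^ 2 * p = ∑ γ ∈ p.support, X j ^ 2 * monomial γ (coeff γ p) := by
    conv_lhs => rw [p.as_sum]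
    rw [Finset.mul_sum]
  have hd : pderiv j (pderiv j p)
      = ∑ γ ∈ p.support, pderiv j (pderiv j (monomial γ (coeff γ p))) := by
    conv_lhs => rw [p.as_sum]
    rw [map_sum, map_sum]
  have hL : LL p = ∑ γ ∈ p.support, LL (monomial γ (coeff γ p)) := by
    conv_lhs => rw [p.as_sum]
    rw [LL_sum]
  rw [hp, hd, LL_sum, LL_sum, hL, ← Finset.sum_add_distrib]
  apply Finset.sum_congr rfl
  intro γ _
  exact LL_Xsq_mul_monomial j γ (coeff γ p)

theorem LL_NS_mul (p : MvPolynomial (Fin n) ℝ) :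
    LL (normSqPoly n * p) = n * LL p + ∑ j, LL (pderiv j (pderiv j p)) := by
  unfold normSqPoly
  rw [Finset.sum_mul, LL_sum]
  rw [Finset.sum_congr rfl (fun j _ => LL_Xsq_mul j p), Finset.sum_add_distrib]
  congr 1
  rw [Finset.sum_const, card_univ, Fintype.card_fin, nsmul_eq_mul]

theorem pderiv_NS (j : Fin n) : pderiv j (normSqPoly n) = C 2 * X j := by
  unfold normSqPoly
  rw [map_sum, Finset.sum_eq_single j]
  · rw [sq, pderiv_mul, pderiv_X_self]
    have h2 : (C (2:ℝ) : MvPolynomial (Fin n) ℝ) = 2 := by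
      rw [map_ofNat]
    rw [h2]
    ring
  · intro i _ hne
    rw [sq, pderiv_mul, pderiv_X_of_ne hne]
    ring
  · intro h
    exact absurd (Finset.mem_univ j) h

theorem pderiv_NS_pow (j : Fin n) : ∀ m : ℕ,
    pderiv j (normSqPoly n ^ (m+1)) = C (2*((m:ℝ)+1)) * (X j * normSqPoly n ^ m)
  | 0 => by
    rw [pow_one, pow_zero, pderiv_NS]
    push_cast
    ring
  | (m+1) => by
    rw [pow_succ, pderiv_mul, pderiv_NS, pderiv_NS_pow j m]
    have hC : (C (2*((m:ℝ)+1+1)) : MvPolynomial (Fin n) ℝ)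
        = C (2*((m:ℝ)+1)) + C 2 := by
      rw [← C_add]
      congr 1
      ring
    push_cast
    rw [hC]
    ring

theorem lap_NS_pow : ∀ m : ℕ,
    ∑ j, pderiv j (pderiv j (normSqPoly n ^ (m+1)))
      = C (2*((m:ℝ)+1)) * (C ((n:ℝ) + 2*(m:ℝ)) * normSqPoly n ^ m)
  | 0 => by
    have h : ∀ j : Fin n, pderiv j (pderiv j (normSqPoly n ^ 1)) = C (2 : ℝ) := by
      intro j
      rw [pow_one, pderiv_NS, pderiv_mul, pderiv_X_self, pderiv_C]
      ring
    rw [Finset.sum_congr rfl (fun j _ => h j), Finset.sum_const, card_univ, Fintype.card_fin,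
      nsmul_eq_mul]
    have hn : ((n:ℕ) : MvPolynomial (Fin n) ℝ) = C ((n:ℝ)) := by
      rw [map_natCast]
    rw [hn, pow_zero, mul_one, ← C_mul, ← C_mul]
    congr 1
    push_cast
    ring
  | (m+1) => by
    have h : ∀ j : Fin n, pderiv j (pderiv j (normSqPoly n ^ (m+2)))
        = C (2*((m:ℝ)+1+1)) * normSqPoly n ^ (m+1)
          + C (2*((m:ℝ)+1+1)) * C (2*((m:ℝ)+1)) * (X j ^ 2 * normSqPoly n ^ m) := by
      intro j
      rw [show m + 2 = (m+1)+1 from rfl, pderiv_NS_pow j (m+1), pderiv_C_mul, pderiv_mul,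
        pderiv_X_self, pderiv_NS_pow j m]
      push_cast
      ring
    rw [Finset.sum_congr rfl (fun j _ => h j), Finset.sum_add_distrib, Finset.sum_const,
      card_univ, Fintype.card_fin, nsmul_eq_mul, ← Finset.mul_sum]
    have hXX : (∑ j : Fin n, X j ^ 2 * normSqPoly n ^ m)
        = normSqPoly n ^ (m+1) := by
      rw [← Finset.sum_mul]
      show normSqPoly n * _ = _
      rw [pow_succ]
      ring
    rw [hXX]
    have hn : ((n:ℕ) : MvPolynomial (Fin n) ℝ) = C ((n:ℝ)) := by
      rw [map_natCast]
    have hc : (C ((n:ℝ)) * C (2*((m:ℝ)+1+1)) + C ((2*((m:ℝ)+1+1)) * (2*((m:ℝ)+1)))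
          : MvPolynomial (Fin n) ℝ)
        = C (2*(((m:ℝ)+1)+1)) * C ((n:ℝ) + 2*((m:ℝ)+1)) := by
      rw [← C_mul, ← C_mul, ← C_add]
      congr 1
      ring
    rw [hn, ← C_mul]
    push_cast
    linear_combination (normSqPoly n ^ (m+1)) * hc

theorem LL_NS_pow_succ : ∀ m : ℕ,
    LL (normSqPoly n ^ (m+1)) = ((n:ℝ) + 2*(m:ℝ)) * LL (normSqPoly n ^ m)
  | 0 => by
    have h : normSqPoly n ^ 1 = normSqPoly n * normSqPoly n ^ 0 := by ring
    rw [h, LL_NS_mul]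
    have h2 : ∀ j : Fin n, pderiv j (pderiv j ((normSqPoly n)^0 : MvPolynomial (Fin n) ℝ)) = 0 := by
      intro j
      rw [pow_zero]
      have : (1 : MvPolynomial (Fin n) ℝ) = C 1 := by simp
      rw [this, pderiv_C, map_zero]
    rw [Finset.sum_congr rfl (fun j _ => by rw [h2 j, LL_zero])]
    simp
  | (m+1) => by
    have h : normSqPoly n ^ (m+2) = normSqPoly n * normSqPoly n ^ (m+1) := by ring
    rw [h, LL_NS_mul, ← LL_sum, lap_NS_pow m, LL_C_mul, LL_C_mul,
      LL_NS_pow_succ m]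
    push_cast
    ring

theorem LL_NS_pow (k : ℕ) : LL (normSqPoly n ^ k) = ∏ j ∈ range k, ((n:ℝ) + 2*(j:ℝ)) := by
  induction k with
  | zero => rw [pow_zero, LL_one, Finset.range_zero, Finset.prod_empty]
  | succ m ih => rw [LL_NS_pow_succ m, ih, Finset.prod_range_succ]; ring


noncomputable def FFb (p q : MvPolynomial (Fin n) ℝ) : ℝ :=
  ∑ α ∈ p.support, coeff α p * coeff α q * factM α

noncomputable def DD (v : Fin n → ℝ) (q : MvPolynomial (Fin n) ℝ) : MvPolynomial (Fin n) ℝ :=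
  ∑ i, v i • pderiv i q

theorem FFb_self (q : MvPolynomial (Fin n) ℝ) : FFb q q = BB q := by
  unfold FFb BB
  exact Finset.sum_congr rfl fun α _ => by rw [sq]

theorem FFb_eq_sum_subset {p : MvPolynomial (Fin n) ℝ} (q : MvPolynomial (Fin n) ℝ)
    {S : Finset (Fin n →₀ ℕ)} (h : p.support ⊆ S) :
    FFb p q = ∑ α ∈ S, coeff α p * coeff α q * factM α := by
  unfold FFb
  apply Finset.sum_subset h
  intro α _ hα
  rw [MvPolynomial.notMem_support_iff.mp hα]
  ring

theorem FFb_symm (p q : MvPolynomial (Fin n) ℝ) : FFb p q = FFb q p := by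
  rw [FFb_eq_sum_subset (p := p) q (Finset.subset_union_left (s₂ := q.support)),
    FFb_eq_sum_subset (p := q) p (Finset.subset_union_right (s₁ := p.support))]
  exact Finset.sum_congr rfl fun α _ => by ring

theorem FFb_add_right (p q₁ q₂ : MvPolynomial (Fin n) ℝ) :
    FFb p (q₁ + q₂) = FFb p q₁ + FFb p q₂ := by
  unfold FFb
  rw [← Finset.sum_add_distrib]
  exact Finset.sum_congr rfl fun α _ => by rw [coeff_add]; ring

theorem FFb_zero_right (p : MvPolynomial (Fin n) ℝ) : FFb p 0 = 0 := by
  unfold FFb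
  exact Finset.sum_eq_zero fun α _ => by rw [coeff_zero]; ring

theorem FFb_smul_right (r : ℝ) (p q : MvPolynomial (Fin n) ℝ) :
    FFb p (r • q) = r * FFb p q := by
  unfold FFb
  rw [Finset.mul_sum]
  exact Finset.sum_congr rfl fun α _ => by rw [coeff_smul, smul_eq_mul]; ring

theorem FFb_sum_right {ι : Type*} (p : MvPolynomial (Fin n) ℝ) (s : Finset ι)
    (f : ι → MvPolynomial (Fin n) ℝ) :
    FFb p (∑ j ∈ s, f j) = ∑ j ∈ s, FFb p (f j) := by
  classical
  induction s using Finset.induction_on with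
  | empty => simp [FFb_zero_right]
  | insert _ _ hns ih => rw [Finset.sum_insert hns, FFb_add_right, ih, Finset.sum_insert hns]

theorem FFb_sum_left {ι : Type*} (p : MvPolynomial (Fin n) ℝ) (s : Finset ι)
    (f : ι → MvPolynomial (Fin n) ℝ) :
    FFb (∑ j ∈ s, f j) p = ∑ j ∈ s, FFb (f j) p := by
  rw [FFb_symm, FFb_sum_right]
  exact Finset.sum_congr rfl fun j _ => FFb_symm p (f j)

theorem FFb_Cmul_left (r : ℝ) (p q : MvPolynomial (Fin n) ℝ) :
    FFb (C r * p) q = r * FFb p q := by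
  rw [FFb_symm, ← smul_eq_C_mul, FFb_smul_right, FFb_symm]

theorem coeff_pderiv (i : Fin n) (q : MvPolynomial (Fin n) ℝ) (γ : Fin n →₀ ℕ) :
    coeff γ (pderiv i q) = ((γ i + 1 : ℕ) : ℝ) * coeff (γ + Finsupp.single i 1) q := by
  classical
  conv_lhs => rw [q.as_sum]
  rw [map_sum, coeff_sum]
  rw [Finset.sum_eq_single (γ + Finsupp.single i 1)]
  · rw [pderiv_monomial, coeff_monomial]
    have h1 : (γ + Finsupp.single i 1 - Finsupp.single i 1 : Fin n →₀ ℕ) = γ :=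
      add_tsub_cancel_right γ _
    rw [if_pos h1]
    have h2 : (γ + Finsupp.single i 1 : Fin n →₀ ℕ) i = γ i + 1 := by
      rw [Finsupp.add_apply, Finsupp.single_eq_same]
    rw [h2]
    push_cast
    ring
  · intro δ _ hne
    rw [pderiv_monomial, coeff_monomial]
    rcases Nat.eq_zero_or_pos (δ i) with h0 | hpos
    · rw [h0]
      split
      · push_cast; ring
      · rfl
    · rw [if_neg]
      intro heq
      apply hne
      have : (δ - Finsupp.single i 1 : Fin n →₀ ℕ) + Finsupp.single i 1 = δ := by
        apply tsub_add_cancel_of_le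
        rw [Finsupp.single_le_iff]
        omega
      rw [← this, heq]
  · intro h
    rw [MvPolynomial.notMem_support_iff.mp h]
    simp

theorem factM_add_single (i : Fin n) (γ : Fin n →₀ ℕ) :
    factM (γ + Finsupp.single i 1) = ((γ i + 1 : ℕ) : ℝ) * factM γ := by
  unfold factM
  rw [Fintype.prod_eq_mul_prod_compl i, Fintype.prod_eq_mul_prod_compl i
    (fun j => ((γ j).factorial : ℝ))]
  have h1 : (γ + Finsupp.single i 1 : Fin n →₀ ℕ) i = γ i + 1 := by
    rw [Finsupp.add_apply, Finsupp.single_eq_same]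
  have h2 : ∏ j ∈ ({i}ᶜ : Finset (Fin n)), (((γ + Finsupp.single i 1 : Fin n →₀ ℕ) j).factorial : ℝ)
      = ∏ j ∈ ({i}ᶜ : Finset (Fin n)), ((γ j).factorial : ℝ) := by
    apply Finset.prod_congr rfl
    intro j hj
    have : j ≠ i := by simpa using hj
    rw [Finsupp.add_apply, Finsupp.single_apply, if_neg (fun h => this h.symm), add_zero]
  rw [h1, h2, Nat.factorial_succ]
  push_cast
  ring

/-- Fischer adjointness between multiplication by `X i` and `∂_i`. -/
theorem FFb_X_mul (i : Fin n) (p q : MvPolynomial (Fin n) ℝ) :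
    FFb (X i * p) q = FFb p (pderiv i q) := by
  unfold FFb
  rw [MvPolynomial.support_X_mul, Finset.sum_map]
  apply Finset.sum_congr rfl
  intro γ _
  have he : (addLeftEmbedding (Finsupp.single i 1)) γ = Finsupp.single i 1 + γ := rfl
  rw [he, MvPolynomial.coeff_X_mul]
  have hcomm : (Finsupp.single i 1 + γ : Fin n →₀ ℕ) = γ + Finsupp.single i 1 := add_comm _ _
  rw [hcomm, coeff_pderiv, factM_add_single]
  ring

theorem FFb_linForm_adj (v : Fin n → ℝ) (p q : MvPolynomial (Fin n) ℝ) :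
    FFb (linFormPoly n v * p) q = FFb p (DD v q) := by
  unfold linFormPoly DD
  rw [Finset.sum_mul, FFb_sum_left, FFb_sum_right]
  apply Finset.sum_congr rfl
  intro i _
  rw [mul_assoc, FFb_Cmul_left, FFb_X_mul, FFb_smul_right]

theorem DD_mul (v : Fin n → ℝ) (p q : MvPolynomial (Fin n) ℝ) :
    DD v (p * q) = DD v p * q + p * DD v q := by
  unfold DD
  rw [Finset.sum_mul, Finset.mul_sum, ← Finset.sum_add_distrib]
  apply Finset.sum_congr rfl
  intro i _
  rw [pderiv_mul, smul_add, smul_mul_assoc, mul_smul_comm]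

theorem DD_linForm (v w : Fin n → ℝ) :
    DD v (linFormPoly n w) = C (∑ i, v i * w i) := by
  unfold DD linFormPoly
  rw [map_sum C (fun i => v i * w i) Finset.univ]
  apply Finset.sum_congr rfl
  intro i _
  rw [map_sum, Finset.sum_eq_single i]
  · rw [pderiv_C_mul, pderiv_X_self, mul_one, smul_eq_C_mul, ← C_mul]
  · intro a _ hne
    rw [pderiv_C_mul, pderiv_X_of_ne hne, mul_zero]
  · intro h
    exact absurd (Finset.mem_univ i) h

theorem BB_one : BB (1 : MvPolynomial (Fin n) ℝ) = 1 := by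
  unfold BB
  have h : (1 : MvPolynomial (Fin n) ℝ) = monomial 0 1 := by simp
  rw [h, MvPolynomial.support_monomial, if_neg one_ne_zero, Finset.sum_singleton,
    coeff_monomial, if_pos rfl]
  unfold factM
  simp

/-- the key multiplicativity lower bound for the Bombieri-type norm -/
theorem BB_linForm_mul (v : Fin n → ℝ) (p : MvPolynomial (Fin n) ℝ) :
    BB (linFormPoly n v * p) = (∑ i, v i ^ 2) * BB p + BB (DD v p) := by
  rw [← FFb_self, ← FFb_self, ← FFb_self]
  rw [FFb_linForm_adj, DD_mul, FFb_add_right, DD_linForm]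
  have h1 : FFb p (C (∑ i, v i * v i) * p) = (∑ i, v i ^ 2) * FFb p p := by
    rw [FFb_symm, FFb_Cmul_left]
    congr 1
    exact Finset.sum_congr rfl fun i _ => (pow_two (v i)).symm
  have h2 : FFb p (linFormPoly n v * DD v p) = FFb (DD v p) (DD v p) := by
    rw [FFb_symm, FFb_linForm_adj]
  rw [h1, h2]

theorem BB_prod_linForm {d : ℕ} (w : Fin d → Fin n → ℝ) (I : Finset (Fin d)) :
    (∏ i ∈ I, (∑ j, w i j ^ 2)) ≤ BB (∏ i ∈ I, linFormPoly n (w i)) := by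
  classical
  induction I using Finset.induction_on with
  | empty => simp [BB_one]
  | @insert a I ha ih =>
    rw [Finset.prod_insert ha, Finset.prod_insert ha, BB_linForm_mul]
    have h1 : (∏ i ∈ I, (∑ j, w i j ^ 2)) * (∑ j, w a j ^ 2)
        ≤ BB (∏ i ∈ I, linFormPoly n (w i)) * (∑ j, w a j ^ 2) := by
      apply mul_le_mul_of_nonneg_right ih
      exact Finset.sum_nonneg fun j _ => sq_nonneg _
    have h2 := BB_nonneg (DD (w a) (∏ i ∈ I, linFormPoly n (w i)))
    calc (∑ j, w a j ^ 2) * ∏ i ∈ I, (∑ j, w i j ^ 2)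
        = (∏ i ∈ I, (∑ j, w i j ^ 2)) * (∑ j, w a j ^ 2) := by ring
      _ ≤ BB (∏ i ∈ I, linFormPoly n (w i)) * (∑ j, w a j ^ 2) := h1
      _ ≤ (∑ j, w a j ^ 2) * BB (∏ i ∈ I, linFormPoly n (w i))
            + BB (DD (w a) (∏ i ∈ I, linFormPoly n (w i))) := by
          rw [mul_comm]
          linarith


end Multi

end Scaffold

section Final
open Finset
variable {n : ℕ}

theorem linForm_homog (v : Fin n → ℝ) : (linFormPoly n v).IsHomogeneous 1 := by
  unfold linFormPoly
  apply MvPolynomial.IsHomogeneous.sum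
  intro a _
  have h := (isHomogeneous_C (Fin n) (v a)).mul (isHomogeneous_X ℝ a)
  simpa using h

theorem prod_linForm_homog {d : ℕ} (w : Fin d → Fin n → ℝ) (I : Finset (Fin d)) :
    (∏ i ∈ I, linFormPoly n (w i)).IsHomogeneous I.card := by
  have h := MvPolynomial.IsHomogeneous.prod I (fun i => linFormPoly n (w i)) (fun _ => 1)
    (fun i _ => linForm_homog (w i))
  have e : (∑ _i ∈ I, 1) = I.card := by rw [Finset.sum_const, smul_eq_mul, mul_one]
  rw [← e]
  exact h

theorem unit_sum_sq {v : EuclideanSpace ℝ (Fin n)} (hv : ‖v‖ = 1) :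
    ∑ j, (v j) ^ 2 = 1 := by
  rw [EuclideanSpace.norm_eq] at hv
  have h : ∑ j, ‖v j‖ ^ 2 = 1 := by
    have := Real.sqrt_eq_one.mp hv
    exact this
  rw [← h]
  apply Finset.sum_congr rfl
  intro j _
  rw [Real.norm_eq_abs, sq_abs]

/-- main quantitative bound from an SOS certificate -/
theorem main_bound (n d k : ℕ) (hk : 1 ≤ k) (hkd : k ≤ d)
    (v : Fin d → EuclideanSpace ℝ (Fin n)) (hv : ∀ i, ‖v i‖ = 1) (l : ℝ)
    (hsos : IsSOS (C l * normSqPoly n ^ k - esymRankOnePoly n d k (fun i => v i))) :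
    1 ≤ l * ∏ j ∈ Finset.range k, ((n:ℝ) + 2*(j:ℝ)) := by
  obtain ⟨m, f, hf⟩ := hsos
  have h0 : 0 ≤ LL (C l * normSqPoly n ^ k - esymRankOnePoly n d k (fun i => v i)) := by
    rw [hf, LL_sum]
    apply Finset.sum_nonneg
    intro j _
    rw [sq]
    exact LL_sq_nonneg (f j)
  rw [LL_sub, LL_C_mul, LL_NS_pow] at h0
  have h1 : 1 ≤ LL (esymRankOnePoly n d k (fun i => v i)) := by
    unfold esymRankOnePoly
    rw [LL_C_mul, LL_sum]
    have hterm : ∀ I ∈ Finset.powersetCard k (Finset.univ : Finset (Fin d)),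
        (1:ℝ) ≤ LL (∏ i ∈ I, (linFormPoly n (fun j => v i j)) ^ 2) := by
      intro I hI
      have hcard : I.card = k := (Finset.mem_powersetCard.mp hI).2
      have hsq : (∏ i ∈ I, (linFormPoly n (fun j => v i j)) ^ 2)
          = (∏ i ∈ I, linFormPoly n (fun j => v i j)) * (∏ i ∈ I, linFormPoly n (fun j => v i j)) := by
        rw [← Finset.prod_mul_distrib]
        exact Finset.prod_congr rfl fun i _ => pow_two _
      rw [hsq]
      refine le_trans ?_ (BB_le_LL_sq (k := I.card) (prod_linForm_homog _ I))
      refine le_trans ?_ (BB_prod_linForm (fun i j => v i j) I)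
      have : ∀ i ∈ I, (∑ j, (v i j) ^ 2) = 1 := fun i _ => unit_sum_sq (hv i)
      rw [Finset.prod_congr rfl this, Finset.prod_const_one]
    have hsum : (Finset.powersetCard k (Finset.univ : Finset (Fin d))).card • (1:ℝ)
        ≤ ∑ I ∈ Finset.powersetCard k (Finset.univ : Finset (Fin d)),
            LL (∏ i ∈ I, (linFormPoly n (fun j => v i j)) ^ 2) :=
      Finset.card_nsmul_le_sum _ _ _ hterm
    rw [Finset.card_powersetCard, Finset.card_univ, Fintype.card_fin, nsmul_eq_mul, mul_one] at hsum
    have hpos : (0:ℝ) < (d.choose k : ℝ) := by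
      exact_mod_cast Nat.choose_pos hkd
    calc (1:ℝ) = (d.choose k : ℝ)⁻¹ * (d.choose k : ℝ) := by
          field_simp
      _ ≤ (d.choose k : ℝ)⁻¹ * ∑ I ∈ Finset.powersetCard k (Finset.univ : Finset (Fin d)),
            LL (∏ i ∈ I, (linFormPoly n (fun j => v i j)) ^ 2) := by
          apply mul_le_mul_of_nonneg_left hsum (by positivity)
  linarith

theorem gauss_sum_real (k : ℕ) : (∑ j ∈ Finset.range k, (j:ℝ)) = k*(k-1)/2 := by
  induction k with
  | zero => simp
  | succ m ih =>
    rw [Finset.sum_range_succ, ih]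
    push_cast
    ring

theorem amgm_bound {n k : ℕ} (hn : 1 ≤ n) (hk : 1 ≤ k) :
    (∏ j ∈ Finset.range k, ((n:ℝ) + 2*(j:ℝ))) ^ ((k:ℝ)⁻¹) ≤ (n:ℝ) + k - 1 := by
  have hz : ∀ j ∈ Finset.range k, (0:ℝ) ≤ (n:ℝ) + 2*(j:ℝ) := by
    intro j _
    positivity
  have hw : ∀ j ∈ Finset.range k, (0:ℝ) ≤ (k:ℝ)⁻¹ := by
    intro j _
    positivity
  have hk0 : (k:ℝ) ≠ 0 := by positivity
  have hwsum : ∑ _j ∈ Finset.range k, (k:ℝ)⁻¹ = 1 := by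
    rw [Finset.sum_const, Finset.card_range, nsmul_eq_mul]
    field_simp
  have hgm := Real.geom_mean_le_arith_mean_weighted (Finset.range k)
    (fun _ => (k:ℝ)⁻¹) (fun j => (n:ℝ) + 2*(j:ℝ)) hw hwsum hz
  have hprod : (∏ j ∈ Finset.range k, ((n:ℝ) + 2*(j:ℝ))) ^ ((k:ℝ)⁻¹)
      = ∏ j ∈ Finset.range k, ((n:ℝ) + 2*(j:ℝ)) ^ ((k:ℝ)⁻¹) := by
    rw [← Real.finset_prod_rpow (Finset.range k) _ hz]
  rw [hprod]
  refine le_trans hgm ?_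
  have hsum : ∑ j ∈ Finset.range k, (k:ℝ)⁻¹ * ((n:ℝ) + 2*(j:ℝ))
      = (n:ℝ) + k - 1 := by
    rw [← Finset.mul_sum, Finset.sum_add_distrib, Finset.sum_const, Finset.card_range,
      nsmul_eq_mul, ← Finset.mul_sum, gauss_sum_real]
    field_simp
    ring
  rw [hsum]

theorem rpow_conclusion {n k : ℕ} (hn : 1 ≤ n) (hk : 1 ≤ k) (x : ℝ) (hx0 : 0 ≤ x)
    (hx : 1 ≤ x * ∏ j ∈ Finset.range k, ((n:ℝ) + 2*(j:ℝ))) :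
    x ^ ((k:ℝ)⁻¹) ≥ 1 / ((n:ℝ) + k - 1) := by
  have hPpos : 0 < ∏ j ∈ Finset.range k, ((n:ℝ) + 2*(j:ℝ)) := by
    apply Finset.prod_pos
    intro j _
    have : (1:ℝ) ≤ (n:ℝ) := by exact_mod_cast hn
    positivity
  set P := ∏ j ∈ Finset.range k, ((n:ℝ) + 2*(j:ℝ)) with hP
  have hxP : 1/P ≤ x := by
    rw [div_le_iff₀ hPpos]
    linarith
  have h1 : (1/P) ^ ((k:ℝ)⁻¹) ≤ x ^ ((k:ℝ)⁻¹) :=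
    Real.rpow_le_rpow (by positivity) hxP (by positivity)
  have h2 : (1/P) ^ ((k:ℝ)⁻¹) = 1 / P ^ ((k:ℝ)⁻¹) := by
    rw [one_div, one_div, Real.inv_rpow hPpos.le]
  have h3 : P ^ ((k:ℝ)⁻¹) ≤ (n:ℝ)+k-1 := amgm_bound hn hk
  have h4 : 0 < P ^ ((k:ℝ)⁻¹) := Real.rpow_pos_of_pos hPpos _
  calc 1/((n:ℝ)+k-1) ≤ 1/(P^((k:ℝ)⁻¹)) := one_div_le_one_div_of_le h4 h3
    _ = (1/P)^((k:ℝ)⁻¹) := h2.symm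
    _ ≤ x ^ ((k:ℝ)⁻¹) := h1

theorem n_pos {n d : ℕ} (hd : 0 < d) (v : Fin d → EuclideanSpace ℝ (Fin n))
    (hv : ∀ i, ‖v i‖ = 1) : 1 ≤ n := by
  by_contra h
  have hn : n = 0 := by omega
  subst hn
  have h0 : v ⟨0, hd⟩ = 0 := by
    ext j
    exact j.elim0
  have := hv ⟨0, hd⟩
  rw [h0, norm_zero] at this
  norm_num at this

/-- any SOS certificate `λ` for the degree-`k` relaxation of a
rank-one instance satisfies `λ^{1/k} ≥ 1/(n+k−1)`; consequently
`OptSOS_k(A) ≥ 1/(n+k−1)`. -/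
theorem stmt_14 (n d k : ℕ) (hk : 1 ≤ k) (hkd : k ≤ d)
    (v : Fin d → EuclideanSpace ℝ (Fin n)) (hv : ∀ i, ‖v i‖ = 1)
    (lam : ℝ) (hlam : 0 ≤ lam)
    (hsos : IsSOS (C lam * normSqPoly n ^ k - esymRankOnePoly n d k (fun i => v i))) :
    lam ^ ((k : ℝ)⁻¹) ≥ 1 / ((n : ℝ) + k - 1) ∧
    (sInf {l : ℝ | 0 ≤ l ∧
        IsSOS (C l * normSqPoly n ^ k - esymRankOnePoly n d k (fun i => v i))})
        ^ ((k : ℝ)⁻¹) ≥ 1 / ((n : ℝ) + k - 1) := by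
  have hd : 0 < d := lt_of_lt_of_le hk hkd
  have hn : 1 ≤ n := n_pos hd v hv
  have hPpos : 0 < ∏ j ∈ Finset.range k, ((n:ℝ) + 2*(j:ℝ)) := by
    apply Finset.prod_pos
    intro j _
    have : (1:ℝ) ≤ (n:ℝ) := by exact_mod_cast hn
    positivity
  constructor
  · exact rpow_conclusion hn hk lam hlam (main_bound n d k hk hkd v hv lam hsos)
  · set S := {l : ℝ | 0 ≤ l ∧
        IsSOS (C l * normSqPoly n ^ k - esymRankOnePoly n d k (fun i => v i))} with hS
    have hmem : lam ∈ S := ⟨hlam, hsos⟩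
    have hlb : ∀ l ∈ S, 1 / (∏ j ∈ Finset.range k, ((n:ℝ) + 2*(j:ℝ))) ≤ l := by
      intro l hl
      have h := main_bound n d k hk hkd v hv l hl.2
      rw [div_le_iff₀ hPpos]
      linarith
    have hsinf : 1 / (∏ j ∈ Finset.range k, ((n:ℝ) + 2*(j:ℝ))) ≤ sInf S :=
      le_csInf ⟨lam, hmem⟩ hlb
    have hsinf0 : 0 ≤ sInf S := le_trans (by positivity) hsinf
    apply rpow_conclusion hn hk (sInf S) hsinf0
    rw [← div_le_iff₀ hPpos]
    exact hsinf

end Final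
end
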